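/- arXiv:1908.06250 — 3 statements merged into one kernel-verified Lean document; each statement's English description precedes it below -/
import Mathlib

section
/- Let G be a strongly connected signed digraph with mirror Laplacian L̂ = (W·L + Lᵀ·W)/2. Then the signed network ẋ = −L̂·x achieves signed-average consensus if and only if G is structurally balanced; precisely: G is structurally balanced if and only if there exists a gauge transformation D with every entry of D·A·D nonnegative such that for every initial state x₀ ∈ ℝⁿ, the solution x(t) = exp(−t·L̂)·x₀ satisfies lim_{t→∞} x(t) = ((1_nᵀ·D·x₀)/n)·D·1_n, where 1_n is the all-ones vector in ℝⁿ. -/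
open Matrix BigOperators Filter

/-- In-degree of node `i`: sum of absolute values of the `i`-th row of `A`. -/
noncomputable def inDeg {n : ℕ} (A : Matrix (Fin n) (Fin n) ℝ) (i : Fin n) : ℝ := ∑ j, |A i j|

/-- Laplacian `L = Δ − A` of the signed digraph with adjacency matrix `A`. -/
noncomputable def lapOf {n : ℕ} (A : Matrix (Fin n) (Fin n) ℝ) : Matrix (Fin n) (Fin n) ℝ :=
  Matrix.diagonal (inDeg A) - A

/-- Laplacian `L̄ = Δ − Ā` of the induced unsigned digraph. -/
noncomputable def lapBar {n : ℕ} (A : Matrix (Fin n) (Fin n) ℝ) : Matrix (Fin n) (Fin n) ℝ :=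
  Matrix.diagonal (inDeg A) - Matrix.of (fun i j => |A i j|)

/-- `det(L̄_ii)`: determinant of `L̄` with its `i`-th row and column removed. -/
noncomputable def minorDet {n : ℕ} (A : Matrix (Fin n) (Fin n) ℝ) (i : Fin n) : ℝ :=
  Matrix.det ((lapBar A).submatrix (fun k : {j : Fin n // j ≠ i} => (k : Fin n))
    (fun k : {j : Fin n // j ≠ i} => (k : Fin n)))

/-- `W = diag(det(L̄_11), …, det(L̄_nn))`. -/
noncomputable def Wmat {n : ℕ} (A : Matrix (Fin n) (Fin n) ℝ) : Matrix (Fin n) (Fin n) ℝ :=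
  Matrix.diagonal (minorDet A)

/-- Mirror adjacency matrix `Â = (W·A + Aᵀ·W)/2`. -/
noncomputable def mirrorAdj {n : ℕ} (A : Matrix (Fin n) (Fin n) ℝ) : Matrix (Fin n) (Fin n) ℝ :=
  (1/2 : ℝ) • (Wmat A * A + Aᵀ * Wmat A)

/-- Mirror Laplacian `L̂ = (W·L + Lᵀ·W)/2`. -/
noncomputable def mirrorLap {n : ℕ} (A : Matrix (Fin n) (Fin n) ℝ) : Matrix (Fin n) (Fin n) ℝ :=
  (1/2 : ℝ) • (Wmat A * lapOf A + (lapOf A)ᵀ * Wmat A)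

/-- `(j, i)` is a directed edge when `a_ij ≠ 0`; strong connectivity: a directed
path between every ordered pair of distinct nodes. -/
def StronglyConnected {n : ℕ} (A : Matrix (Fin n) (Fin n) ℝ) : Prop :=
  ∀ i j : Fin n, i ≠ j → Relation.TransGen (fun u v => A v u ≠ 0) i j

/-- `σ` is the diagonal of a gauge transformation: each entry is `±1`. -/
def IsGauge {n : ℕ} (σ : Fin n → ℝ) : Prop := ∀ i, σ i = 1 ∨ σ i = -1

/-- Structural balance: there is a gauge transformation `D = diag σ` with all entries
of `D·A·D` (entrywise `σ i * A i j * σ j`) nonnegative. -/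
def StructBalanced {n : ℕ} (A : Matrix (Fin n) (Fin n) ℝ) : Prop :=
  ∃ σ : Fin n → ℝ, IsGauge σ ∧ ∀ i j, 0 ≤ σ i * A i j * σ j

/-- Improved Laplacian potential function
`Φ_e(x) = Σ_i Σ_j det(L̄_ii)·|a_ij|·(x_i − sgn(a_ij)·x_j)²`. -/
noncomputable def PhiE {n : ℕ} (A : Matrix (Fin n) (Fin n) ℝ) (x : Fin n → ℝ) : ℝ :=
  ∑ i, ∑ j, minorDet A i * |A i j| * (x i - Real.sign (A i j) * x j) ^ 2

/- ===== auxiliary lemmas ===== -/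

/-- Max-modulus propagation: a vector vanishing at `i0` and satisfying the unsigned
Laplacian equation at all other nodes is zero. -/
lemma ker_aux {n : ℕ} {A : Matrix (Fin n) (Fin n) ℝ}
    (hsc : StronglyConnected A) {i0 : Fin n} {x : Fin n → ℝ}
    (h0 : x i0 = 0)
    (hrow : ∀ k, k ≠ i0 → inDeg A k * x k = ∑ j, |A k j| * x j) :
    ∀ k, x k = 0 := by
  by_contra hc
  push_neg at hc
  obtain ⟨k0, hk0⟩ := hc
  obtain ⟨k, -, hk⟩ := Finset.exists_max_image Finset.univ (fun j => |x j|) ⟨k0, Finset.mem_univ k0⟩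
  have hm : 0 < |x k| := lt_of_lt_of_le (abs_pos.mpr hk0) (hk k0 (Finset.mem_univ k0))
  set m := |x k| with hmdef
  have step : ∀ j, |x j| = m → ∀ l, A j l ≠ 0 → |x l| = m := by
    intro j hj l hl
    have hji : j ≠ i0 := by
      intro h
      rw [h, h0, abs_zero] at hj
      exact absurd hj.symm hm.ne'
    have hr := hrow j hji
    have hd0 : 0 ≤ inDeg A j := Finset.sum_nonneg fun _ _ => abs_nonneg _
    have upper : ∀ l' ∈ Finset.univ, |A j l'| * |x l'| ≤ |A j l'| * m :=
      fun l' _ => mul_le_mul_of_nonneg_left (hk l' (Finset.mem_univ l')) (abs_nonneg _)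
    have key : ∑ l', |A j l'| * |x l'| = ∑ l', |A j l'| * m := by
      refine le_antisymm (Finset.sum_le_sum upper) ?_
      calc ∑ l', |A j l'| * m = inDeg A j * m := by rw [inDeg, Finset.sum_mul]
        _ = |inDeg A j * x j| := by rw [abs_mul, abs_of_nonneg hd0, hj]
        _ = |∑ l', |A j l'| * x l'| := by rw [hr]
        _ ≤ ∑ l', abs (|A j l'| * x l') := Finset.abs_sum_le_sum_abs _ _
        _ = ∑ l', |A j l'| * |x l'| := by simp [abs_mul, abs_abs]
    have := (Finset.sum_eq_sum_iff_of_le upper).1 key l (Finset.mem_univ l)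
    exact mul_left_cancel₀ (abs_ne_zero.mpr hl) this
  have hik : i0 ≠ k := by
    intro h
    have : m = 0 := by rw [hmdef, ← h, h0, abs_zero]
    exact hm.ne' this
  have hfin : |x i0| = m := by
    refine Relation.TransGen.head_induction_on (hsc i0 k hik) ?_ ?_
    · intro a h; exact step k rfl a h
    · intro a c h _ hc; exact step c hc a h
  rw [h0, abs_zero] at hfin
  exact absurd hfin.symm hm.ne'

/-- A weakly row-diagonally dominant real matrix has nonnegative determinant. -/
lemma det_nonneg_of_weak_dom {ι : Type*} [Fintype ι] [DecidableEq ι] (M : Matrix ι ι ℝ)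
    (hdom : ∀ k, ∑ j ∈ Finset.univ.erase k, |M k j| ≤ M k k) : 0 ≤ M.det := by
  have key : ∀ ε : ℝ, 0 < ε → 0 < (M + ε • (1 : Matrix ι ι ℝ)).det := by
    intro ε hε
    set g : ℝ → ℝ := fun s =>
      (Matrix.of fun k j => if k = j then M k k + ε else s * M k j).det with hg
    have hgc : Continuous g := by
      apply Continuous.matrix_det
      apply continuous_matrix
      intro i j
      by_cases h : i = j
      · simp only [Matrix.of_apply, if_pos h]; exact continuous_const
      · simp only [Matrix.of_apply, if_neg h]; exact continuous_id.mul continuous_const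
    have hgne : ∀ s ∈ Set.uIcc (0:ℝ) 1, g s ≠ 0 := by
      intro s hs
      rw [Set.uIcc_of_le (by norm_num : (0:ℝ) ≤ 1)] at hs
      apply det_ne_zero_of_sum_row_lt_diag
      intro k
      have h1 : ∑ j ∈ Finset.univ.erase k, ‖(Matrix.of fun k j =>
          if k = j then M k k + ε else s * M k j) k j‖ ≤ ∑ j ∈ Finset.univ.erase k, |M k j| := by
        apply Finset.sum_le_sum
        intro j hj
        have hkj : k ≠ j := fun h => (Finset.mem_erase.mp hj).1 h.symm
        simp only [Matrix.of_apply, if_neg hkj, Real.norm_eq_abs, abs_mul]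
        have : |s| ≤ 1 := abs_le.mpr ⟨by linarith [hs.1], hs.2⟩
        nlinarith [abs_nonneg (M k j), abs_nonneg s]
      have hMkk : 0 ≤ M k k :=
        le_trans (Finset.sum_nonneg fun j _ => abs_nonneg _) (hdom k)
      calc ∑ j ∈ Finset.univ.erase k, ‖(Matrix.of fun k j =>
              if k = j then M k k + ε else s * M k j) k j‖
          ≤ ∑ j ∈ Finset.univ.erase k, |M k j| := h1
        _ ≤ M k k := hdom k
        _ < M k k + ε := by linarith
        _ = ‖(Matrix.of fun k j => if k = j then M k k + ε else s * M k j) k k‖ := by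
            have he : (Matrix.of fun k j => if k = j then M k k + ε else s * M k j) k k
                = M k k + ε := if_pos rfl
            rw [he, Real.norm_eq_abs, abs_of_pos (by linarith)]
    have hg0 : 0 < g 0 := by
      have hzero : (Matrix.of fun k j => if k = j then M k k + ε else (0:ℝ) * M k j)
          = Matrix.diagonal (fun k => M k k + ε) := by
        ext k j
        by_cases h : k = j <;> simp [Matrix.diagonal, h]
      have hMkk : ∀ k, 0 ≤ M k k :=
        fun k => le_trans (Finset.sum_nonneg fun j _ => abs_nonneg _) (hdom k)
      rw [hg]
      simp only []
      rw [hzero, Matrix.det_diagonal]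
      exact Finset.prod_pos fun k _ => by linarith [hMkk k]
    have hg1 : 0 < g 1 := by
      rcases lt_trichotomy (g 1) 0 with h | h | h
      · exfalso
        have h0mem : (0:ℝ) ∈ Set.uIcc (g 0) (g 1) :=
          Set.mem_uIcc.mpr (Or.inr ⟨h.le, hg0.le⟩)
        obtain ⟨s, hs, hgs⟩ := intermediate_value_uIcc (hgc.continuousOn) h0mem
        exact hgne s hs hgs
      · exact absurd h (hgne 1 (Set.right_mem_uIcc))
      · exact h
    have hident : (Matrix.of fun k j => if k = j then M k k + ε else (1:ℝ) * M k j)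
        = M + ε • (1 : Matrix ι ι ℝ) := by
      ext k j
      by_cases h : k = j <;>
        simp [Matrix.one_apply, h, Matrix.add_apply, Matrix.smul_apply, add_comm]
    rw [← hident]
    exact hg1
  have hcont : Continuous fun ε : ℝ => (M + ε • (1 : Matrix ι ι ℝ)).det := by
    apply Continuous.matrix_det
    apply continuous_matrix
    intro i j
    simp only [Matrix.add_apply, Matrix.smul_apply, smul_eq_mul]
    exact continuous_const.add (continuous_id.mul continuous_const)
  have htend : Filter.Tendsto (fun ε : ℝ => (M + ε • (1 : Matrix ι ι ℝ)).det)
      (nhdsWithin 0 (Set.Ioi 0)) (nhds ((M + (0:ℝ) • (1 : Matrix ι ι ℝ)).det)) :=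
    (hcont.tendsto 0).mono_left nhdsWithin_le_nhds
  have h0 : 0 ≤ (M + (0:ℝ) • (1 : Matrix ι ι ℝ)).det := by
    refine ge_of_tendsto htend ?_
    filter_upwards [self_mem_nhdsWithin] with ε hε
    exact (key ε hε).le
  simpa using h0

lemma sum_subtype_ne {n : ℕ} (i : Fin n) (f : Fin n → ℝ) (hfi : f i = 0) :
    ∑ j : {j : Fin n // j ≠ i}, f (j : Fin n) = ∑ j, f j := by
  rw [← Finset.sum_subtype (Finset.univ.erase i)
      (fun x => by simp [Finset.mem_erase]) f]
  exact Finset.sum_erase _ hfi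

/-- Positivity of the principal minors of the unsigned Laplacian. -/
lemma minorDet_pos {n : ℕ} {A : Matrix (Fin n) (Fin n) ℝ}
    (hdiag : ∀ i, A i i = 0) (hsc : StronglyConnected A) (i : Fin n) :
    0 < minorDet A i := by
  set M : Matrix {j : Fin n // j ≠ i} {j : Fin n // j ≠ i} ℝ :=
    (lapBar A).submatrix (fun k : {j : Fin n // j ≠ i} => (k : Fin n))
      (fun k : {j : Fin n // j ≠ i} => (k : Fin n)) with hM
  have hMd : ∀ k : {j : Fin n // j ≠ i}, M k k = inDeg A k := by
    intro k
    simp [hM, lapBar, Matrix.sub_apply, hdiag (k : Fin n)]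
  have hMo : ∀ k j : {j : Fin n // j ≠ i}, k ≠ j → M k j = -|A k j| := by
    intro k j hkj
    have hne : (k : Fin n) ≠ (j : Fin n) := fun h => hkj (Subtype.ext h)
    simp [hM, lapBar, Matrix.diagonal_apply_ne _ hne]
  have hdom : ∀ k, ∑ j ∈ Finset.univ.erase k, |M k j| ≤ M k k := by
    intro k
    rw [hMd]
    have h1 : ∑ j ∈ Finset.univ.erase k, |M k j|
        = ∑ j ∈ Finset.univ.erase k, |A (k : Fin n) (j : Fin n)| := by
      apply Finset.sum_congr rfl
      intro j hj
      rw [hMo k j (fun h => (Finset.mem_erase.mp hj).1 h.symm), abs_neg, abs_abs]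
    rw [h1]
    have h2 : ∑ j ∈ Finset.univ.erase k, |A (k : Fin n) (j : Fin n)|
        = ∑ j ∈ (Finset.univ.erase k).image (fun l : {j : Fin n // j ≠ i} => (l : Fin n)),
            |A (k : Fin n) j| := by
      rw [Finset.sum_image (fun a _ b _ h => Subtype.ext h)]
    rw [h2, inDeg]
    apply Finset.sum_le_sum_of_subset_of_nonneg (Finset.subset_univ _)
    intro j _ _
    exact abs_nonneg _
  have h0 : 0 ≤ M.det := det_nonneg_of_weak_dom M hdom
  have hne : M.det ≠ 0 := by
    intro hdet
    obtain ⟨v, hv0, hveq⟩ := (Matrix.exists_mulVec_eq_zero_iff).mpr hdet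
    set x : Fin n → ℝ := fun j => if h : j = i then 0 else v ⟨j, h⟩ with hx
    have hx0 : x i = 0 := by simp [hx]
    have hxco : ∀ j : {j : Fin n // j ≠ i}, x (j : Fin n) = v j := by
      intro j; simp [hx, j.2]
    have hrow : ∀ k, k ≠ i → inDeg A k * x k = ∑ j, |A k j| * x j := by
      intro k hk
      have h3 := congrFun hveq ⟨k, hk⟩
      simp only [Matrix.mulVec, dotProduct, Pi.zero_apply] at h3
      have h4 : ∑ j : {j : Fin n // j ≠ i}, M ⟨k, hk⟩ j * v j = 0 := h3
      have h5 : ∀ j : {j : Fin n // j ≠ i},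
          M ⟨k, hk⟩ j * v j
            = (Matrix.diagonal (inDeg A) k (j : Fin n) - |A k (j : Fin n)|) * x (j : Fin n) := by
        intro j
        rw [hxco]
        simp [hM, lapBar]
      rw [Finset.sum_congr rfl (fun j _ => h5 j)] at h4
      have h6 : ∑ j : {j : Fin n // j ≠ i},
          (Matrix.diagonal (inDeg A) k (j : Fin n) - |A k (j : Fin n)|) * x (j : Fin n)
          = ∑ j, (Matrix.diagonal (inDeg A) k j - |A k j|) * x j := by
        exact sum_subtype_ne i (fun j => (Matrix.diagonal (inDeg A) k j - |A k j|) * x j)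
          (by simp only [hx0, mul_zero])
      rw [h6] at h4
      have h7 : ∑ j, (Matrix.diagonal (inDeg A) k j - |A k j|) * x j
          = inDeg A k * x k - ∑ j, |A k j| * x j := by
        rw [Finset.sum_congr rfl (fun j _ => sub_mul _ _ _), Finset.sum_sub_distrib]
        congr 1
        rw [Finset.sum_eq_single k]
        · simp
        · intro j _ hj
          rw [Matrix.diagonal_apply_ne' _ hj, zero_mul]
        · intro h; exact absurd (Finset.mem_univ k) h
      rw [h7] at h4
      linarith
    have hz := ker_aux hsc hx0 hrow
    apply hv0
    funext j
    rw [← hxco j, hz j]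
    rfl
  have : minorDet A i = M.det := rfl
  rw [this]
  exact lt_of_le_of_ne h0 (Ne.symm hne)

lemma lap_mulVec {n : ℕ} (B : Matrix (Fin n) (Fin n) ℝ) (x : Fin n → ℝ) (k : Fin n) :
    (lapOf B *ᵥ x) k = inDeg B k * x k - ∑ j, B k j * x j := by
  simp only [lapOf, Matrix.sub_mulVec, Matrix.mulVec, dotProduct, Matrix.sub_apply,
    Pi.sub_apply]
  rw [Finset.sum_congr rfl (fun j _ => sub_mul (Matrix.diagonal (inDeg B) k j) (B k j) (x j)),
    Finset.sum_sub_distrib]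
  congr 1
  rw [Finset.sum_eq_single k]
  · simp
  · intro j _ hj; rw [Matrix.diagonal_apply_ne' _ hj, zero_mul]
  · intro h; exact absurd (Finset.mem_univ k) h

lemma lapOf_eq_lapBar {n : ℕ} {B : Matrix (Fin n) (Fin n) ℝ} (hBnn : ∀ i j, 0 ≤ B i j) :
    lapOf B = lapBar B := by
  unfold lapOf lapBar
  congr 1
  ext i j
  exact (abs_of_nonneg (hBnn i j)).symm

lemma lap_mulVec_one {n : ℕ} {B : Matrix (Fin n) (Fin n) ℝ} (hBnn : ∀ i j, 0 ≤ B i j) :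
    lapOf B *ᵥ (fun _ => (1:ℝ)) = 0 := by
  funext k
  rw [lap_mulVec]
  simp only [mul_one, Pi.zero_apply]
  rw [inDeg, sub_eq_zero]
  exact Finset.sum_congr rfl fun j _ => abs_of_nonneg (hBnn k j)

lemma ker_lap_const {n : ℕ} (hn : 0 < n) {B : Matrix (Fin n) (Fin n) ℝ}
    (hBnn : ∀ i j, 0 ≤ B i j) (hBsc : StronglyConnected B) {x : Fin n → ℝ}
    (hx : lapOf B *ᵥ x = 0) : ∀ k l, x k = x l := by
  set i0 : Fin n := ⟨0, hn⟩
  set y : Fin n → ℝ := fun j => x j - x i0 with hy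
  have hy0 : y i0 = 0 := by simp [hy]
  have hLy : lapOf B *ᵥ y = 0 := by
    have : y = x - (x i0) • (fun _ => (1:ℝ)) := by
      funext j; simp [hy]
    rw [this, Matrix.mulVec_sub, hx, Matrix.mulVec_smul, lap_mulVec_one hBnn]
    simp
  have hrow : ∀ k, k ≠ i0 → inDeg B k * y k = ∑ j, |B k j| * y j := by
    intro k _
    have h1 := congrFun hLy k
    rw [lap_mulVec] at h1
    simp only [Pi.zero_apply] at h1
    have h2 : ∑ j, |B k j| * y j = ∑ j, B k j * y j :=
      Finset.sum_congr rfl fun j _ => by rw [abs_of_nonneg (hBnn k j)]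
    rw [h2]
    linarith
  have hz := ker_aux hBsc hy0 hrow
  intro k l
  have hk := hz k
  have hl := hz l
  simp only [hy] at hk hl
  linarith

lemma adjugate_diag_eq {m : ℕ} (M : Matrix (Fin (m+1)) (Fin (m+1)) ℝ) (i : Fin (m+1)) :
    M.adjugate i i = Matrix.det (M.submatrix (fun k : {j : Fin (m+1) // j ≠ i} => (k : Fin (m+1)))
      (fun k : {j : Fin (m+1) // j ≠ i} => (k : Fin (m+1)))) := by
  rw [Matrix.adjugate_apply, Matrix.det_succ_row _ i, Finset.sum_eq_single i]
  · have h1 : (M.updateRow i (Pi.single i 1)) i i = 1 := by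
      rw [Matrix.updateRow_self, Pi.single_eq_same]
    have h2 : (M.updateRow i (Pi.single i 1)).submatrix i.succAbove i.succAbove
        = (M.submatrix (fun k : {j : Fin (m+1) // j ≠ i} => (k : Fin (m+1)))
            (fun k : {j : Fin (m+1) // j ≠ i} => (k : Fin (m+1)))).submatrix
          (fun k => (finSuccAboveEquiv i k : {j : Fin (m+1) // j ≠ i}))
          (fun k => (finSuccAboveEquiv i k : {j : Fin (m+1) // j ≠ i})) := by
      ext k l
      simp [Matrix.submatrix_apply, finSuccAboveEquiv_apply,
        Matrix.updateRow_ne (Fin.succAbove_ne i k)]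
    rw [h1, h2, Matrix.det_submatrix_equiv_self (finSuccAboveEquiv i)]
    have : ((-1:ℝ)) ^ ((i:ℕ) + (i:ℕ)) = 1 := Even.neg_one_pow ⟨_, rfl⟩
    rw [this, one_mul, one_mul]
  · intro j _ hji
    have : (M.updateRow i (Pi.single i 1)) i j = 0 := by
      rw [Matrix.updateRow_self, Pi.single_eq_of_ne hji]
    rw [this, mul_zero, zero_mul]
  · intro h; exact absurd (Finset.mem_univ i) h

/-- The vector of principal minors is a left null vector of the Laplacian. -/
lemma left_null {m : ℕ} {B : Matrix (Fin (m+1)) (Fin (m+1)) ℝ}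
    (hBnn : ∀ i j, 0 ≤ B i j) (hBsc : StronglyConnected B) :
    ∀ j, ∑ k, minorDet B k * lapOf B k j = 0 := by
  set L := lapOf B with hL
  have hdet : L.det = 0 := by
    rw [← Matrix.exists_mulVec_eq_zero_iff]
    refine ⟨fun _ => (1:ℝ), ?_, lap_mulVec_one hBnn⟩
    intro h
    have := congrFun h 0
    simp at this
  have hLadj : L * L.adjugate = 0 := by
    rw [Matrix.mul_adjugate, hdet, zero_smul]
  have hcols : ∀ j k, L.adjugate k j = L.adjugate j j := by
    intro j k
    have hker : L *ᵥ (fun l => L.adjugate l j) = 0 := by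
      funext k'
      have := congrFun (congrFun hLadj k') j
      simpa [Matrix.mul_apply, Matrix.mulVec, dotProduct] using this
    exact ker_lap_const (Nat.succ_pos m) hBnn hBsc hker k j
  have hdiagadj : ∀ k, L.adjugate k k = minorDet B k := by
    intro k
    rw [adjugate_diag_eq, minorDet, hL, lapOf_eq_lapBar hBnn]
  intro j
  have hadjL : L.adjugate * L = 0 := by
    rw [Matrix.adjugate_mul, hdet, zero_smul]
  have h1 := congrFun (congrFun hadjL j) j
  simp only [Matrix.mul_apply, Matrix.zero_apply] at h1
  rw [← h1]
  apply Finset.sum_congr rfl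
  intro k _
  rw [hcols k j, hdiagadj k]

lemma inDeg_eq_sum {m : ℕ} {B : Matrix (Fin (m+1)) (Fin (m+1)) ℝ} (k : Fin (m+1))
    (h : ∀ j, 0 ≤ B k j) : inDeg B k = ∑ j, B k j :=
  Finset.sum_congr rfl fun j _ => abs_of_nonneg (h j)

lemma colId {m : ℕ} {B : Matrix (Fin (m+1)) (Fin (m+1)) ℝ}
    (hBnn : ∀ i j, 0 ≤ B i j) (hBsc : StronglyConnected B) :
    ∀ j, ∑ k, minorDet B k * B k j = minorDet B j * inDeg B j := by
  intro j
  have h0 := left_null hBnn hBsc j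
  have h1 : ∑ k, minorDet B k * lapOf B k j
      = ∑ k, (minorDet B k * Matrix.diagonal (inDeg B) k j - minorDet B k * B k j) := by
    apply Finset.sum_congr rfl
    intro k _
    simp [lapOf, Matrix.sub_apply, mul_sub]
  rw [h1, Finset.sum_sub_distrib] at h0
  have h2 : ∑ k, minorDet B k * Matrix.diagonal (inDeg B) k j = minorDet B j * inDeg B j := by
    rw [Finset.sum_eq_single j]
    · simp
    · intro k _ hk; rw [Matrix.diagonal_apply_ne _ hk, mul_zero]
    · intro h; exact absurd (Finset.mem_univ j) h
  rw [h2] at h0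
  linarith

lemma quadForm {m : ℕ} {B : Matrix (Fin (m+1)) (Fin (m+1)) ℝ}
    (hBnn : ∀ i j, 0 ≤ B i j) (hBsc : StronglyConnected B) (x : Fin (m+1) → ℝ) :
    x ⬝ᵥ (mirrorLap B *ᵥ x)
      = (1/2) * ∑ k, ∑ j, minorDet B k * B k j * (x k - x j)^2 := by
  set w := minorDet B with hw
  have hdot : x ⬝ᵥ (mirrorLap B *ᵥ x) = ∑ k, w k * x k * (lapOf B *ᵥ x) k := by
    unfold mirrorLap
    rw [Matrix.smul_mulVec, dotProduct_smul, Matrix.add_mulVec,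
      dotProduct_add]
    have t1 : x ⬝ᵥ ((Wmat B * lapOf B) *ᵥ x) = ∑ k, w k * x k * (lapOf B *ᵥ x) k := by
      rw [← Matrix.mulVec_mulVec]
      simp only [dotProduct, Wmat, Matrix.mulVec_diagonal]
      apply Finset.sum_congr rfl
      intro k _
      ring
    have t2 : x ⬝ᵥ (((lapOf B)ᵀ * Wmat B) *ᵥ x) = ∑ k, w k * x k * (lapOf B *ᵥ x) k := by
      rw [← Matrix.mulVec_mulVec, Matrix.dotProduct_mulVec, Matrix.vecMul_transpose]
      simp only [dotProduct, Wmat, Matrix.mulVec_diagonal]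
      apply Finset.sum_congr rfl
      intro k _
      ring
    rw [t1, t2, smul_eq_mul]
    ring
  rw [hdot]
  have hexp : ∀ k ∈ Finset.univ, w k * x k * (lapOf B *ᵥ x) k
      = ∑ j, (w k * B k j * x k ^ 2 - w k * B k j * x k * x j) := by
    intro k _
    rw [lap_mulVec, inDeg_eq_sum k (hBnn k), mul_sub, Finset.sum_sub_distrib]
    congr 1
    · rw [Finset.sum_mul, Finset.mul_sum]
      apply Finset.sum_congr rfl; intro j _; ring
    · rw [Finset.mul_sum]
      apply Finset.sum_congr rfl; intro j _; ring
  rw [Finset.sum_congr rfl hexp]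
  set T := ∑ k, ∑ j, (w k * B k j * x k ^ 2 - w k * B k j * x k * x j) with hT
  have key : ∑ k, ∑ j, w k * B k j * x j ^ 2 = ∑ k, ∑ j, w k * B k j * x k ^ 2 := by
    rw [Finset.sum_comm]
    apply Finset.sum_congr rfl
    intro j _
    rw [← Finset.sum_mul, colId hBnn hBsc j, inDeg_eq_sum j (hBnn j), Finset.mul_sum,
      Finset.sum_mul]
  have hzero : ∑ k, ∑ j, (w k * B k j * x k ^ 2 - w k * B k j * x j ^ 2) = 0 := by
    simp only [Finset.sum_sub_distrib]
    rw [key, sub_self]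
  have h2T : ∑ k, ∑ j, (2*(w k * B k j * x k ^ 2 - w k * B k j * x k * x j)) = 2 * T := by
    rw [hT, Finset.mul_sum]
    apply Finset.sum_congr rfl; intro k _
    rw [Finset.mul_sum]
  have hG : ∑ k, ∑ j, w k * B k j * (x k - x j)^2 = 2 * T := by
    calc ∑ k, ∑ j, w k * B k j * (x k - x j)^2
        = ∑ k, ∑ j, (2*(w k * B k j * x k ^ 2 - w k * B k j * x k * x j)
            - (w k * B k j * x k ^ 2 - w k * B k j * x j ^ 2)) := by
          apply Finset.sum_congr rfl; intro k _
          apply Finset.sum_congr rfl; intro j _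
          ring
      _ = ∑ k, ∑ j, (2*(w k * B k j * x k ^ 2 - w k * B k j * x k * x j))
            - ∑ k, ∑ j, (w k * B k j * x k ^ 2 - w k * B k j * x j ^ 2) := by
          simp only [Finset.sum_sub_distrib]
      _ = 2 * T - 0 := by rw [h2T, hzero]
      _ = 2 * T := by ring
  rw [hG]
  ring

lemma mirrorLap_symm {n : ℕ} (B : Matrix (Fin n) (Fin n) ℝ) :
    (mirrorLap B)ᵀ = mirrorLap B := by
  unfold mirrorLap Wmat
  rw [Matrix.transpose_smul, Matrix.transpose_add, Matrix.transpose_mul, Matrix.transpose_mul,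
    Matrix.transpose_transpose, Matrix.diagonal_transpose, add_comm]

lemma mirrorLap_isHermitian {n : ℕ} (B : Matrix (Fin n) (Fin n) ℝ) :
    (mirrorLap B).IsHermitian := by
  have h := mirrorLap_symm B
  unfold Matrix.IsHermitian
  ext i j
  rw [Matrix.conjTranspose_apply, star_trivial]
  conv_rhs => rw [← h]
  rw [Matrix.transpose_apply]

lemma mirror_one {m : ℕ} {B : Matrix (Fin (m+1)) (Fin (m+1)) ℝ}
    (hBnn : ∀ i j, 0 ≤ B i j) (hBsc : StronglyConnected B) :
    mirrorLap B *ᵥ (fun _ => (1:ℝ)) = 0 := by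
  unfold mirrorLap
  rw [Matrix.smul_mulVec, Matrix.add_mulVec, ← Matrix.mulVec_mulVec,
    ← Matrix.mulVec_mulVec, lap_mulVec_one hBnn]
  have h1 : Wmat B *ᵥ (0 : Fin (m+1) → ℝ) = 0 := Matrix.mulVec_zero _
  rw [h1]
  have h2 : (lapOf B)ᵀ *ᵥ (Wmat B *ᵥ (fun _ => (1:ℝ))) = 0 := by
    have hw : Wmat B *ᵥ (fun _ => (1:ℝ)) = minorDet B := by
      funext k
      simp [Wmat, Matrix.mulVec_diagonal]
    rw [hw]
    funext j
    have := left_null hBnn hBsc j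
    simp only [Matrix.mulVec, dotProduct, Matrix.transpose_apply, Pi.zero_apply]
    rw [← this]
    apply Finset.sum_congr rfl
    intro k _
    ring
  rw [h2]
  simp

lemma mirror_psd {m : ℕ} {B : Matrix (Fin (m+1)) (Fin (m+1)) ℝ}
    (hBnn : ∀ i j, 0 ≤ B i j) (hBdiag : ∀ i, B i i = 0) (hBsc : StronglyConnected B)
    (x : Fin (m+1) → ℝ) :
    0 ≤ x ⬝ᵥ (mirrorLap B *ᵥ x) := by
  rw [quadForm hBnn hBsc]
  apply mul_nonneg (by norm_num)
  apply Finset.sum_nonneg; intro k _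
  apply Finset.sum_nonneg; intro j _
  apply mul_nonneg (mul_nonneg (minorDet_pos hBdiag hBsc k).le (hBnn k j))
  positivity

lemma mirror_ker {m : ℕ} {B : Matrix (Fin (m+1)) (Fin (m+1)) ℝ}
    (hBnn : ∀ i j, 0 ≤ B i j) (hBdiag : ∀ i, B i i = 0) (hBsc : StronglyConnected B)
    {x : Fin (m+1) → ℝ} (hx : mirrorLap B *ᵥ x = 0) : ∀ k l, x k = x l := by
  have h0 : x ⬝ᵥ (mirrorLap B *ᵥ x) = 0 := by rw [hx]; simp
  rw [quadForm hBnn hBsc] at h0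
  have hterms : ∀ k ∈ Finset.univ, ∀ j ∈ Finset.univ,
      (0:ℝ) ≤ minorDet B k * B k j * (x k - x j)^2 := by
    intro k _ j _
    apply mul_nonneg (mul_nonneg (minorDet_pos hBdiag hBsc k).le (hBnn k j))
    positivity
  have hz : ∀ k ∈ Finset.univ, ∀ j ∈ Finset.univ,
      minorDet B k * B k j * (x k - x j)^2 = 0 := by
    have hsum : ∑ k, ∑ j, minorDet B k * B k j * (x k - x j)^2 = 0 := by linarith
    have houter := (Finset.sum_eq_zero_iff_of_nonneg
      (fun k hk => Finset.sum_nonneg (fun j hj => hterms k hk j hj))).mp hsum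
    intro k hk j hj
    exact (Finset.sum_eq_zero_iff_of_nonneg (fun j hj => hterms k hk j hj)).mp (houter k hk) j hj
  have hedge : ∀ k j, B k j ≠ 0 → x k = x j := by
    intro k j hB
    have h := hz k (Finset.mem_univ k) j (Finset.mem_univ j)
    have hw : minorDet B k ≠ 0 := (minorDet_pos hBdiag hBsc k).ne'
    have : (x k - x j)^2 = 0 := by
      rcases mul_eq_zero.mp h with h' | h'
      · exact absurd (mul_eq_zero.mp h') (by push_neg; exact ⟨hw, hB⟩)
      · exact h'
    have := pow_eq_zero_iff (n := 2) (by norm_num) |>.mp this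
    linarith
  have key : ∀ u v, Relation.TransGen (fun a b => B b a ≠ 0) u v → x u = x v := by
    intro u v h
    induction h with
    | single h => exact (hedge _ _ h).symm
    | tail _ h ih => exact ih.trans (hedge _ _ h).symm
  intro k l
  rcases eq_or_ne k l with rfl | hkl
  · rfl
  · exact key k l (hBsc k l hkl)

/-- Spectral limit lemma. -/
lemma tendsto_exp_core {m : ℕ} {S : Matrix (Fin (m+1)) (Fin (m+1)) ℝ}
    (hsym : S.IsHermitian) (hpsd : ∀ x, 0 ≤ x ⬝ᵥ (S *ᵥ x))
    (h1 : S *ᵥ (fun _ => (1:ℝ)) = 0)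
    (hker : ∀ x : Fin (m+1) → ℝ, S *ᵥ x = 0 → ∀ k l, x k = x l)
    (y : Fin (m+1) → ℝ) :
    Tendsto (fun t : ℝ => NormedSpace.exp (-(t • S)) *ᵥ y) atTop
      (nhds (fun _ => (∑ j, y j) / ((m:ℝ)+1))) := by
  have hP : S.PosSemidef := by
    refine Matrix.posSemidef_iff_dotProduct_mulVec.mpr ⟨hsym, fun x => ?_⟩
    have hst : star x = x := by funext i; simp
    rw [hst]
    exact hpsd x
  set lam := hsym.eigenvalues with hlam
  set U : Matrix (Fin (m+1)) (Fin (m+1)) ℝ :=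
    ((hsym.eigenvectorUnitary : Matrix.unitaryGroup (Fin (m+1)) ℝ) :
      Matrix (Fin (m+1)) (Fin (m+1)) ℝ) with hUdef
  have hU : U ∈ Matrix.unitaryGroup (Fin (m+1)) ℝ := hsym.eigenvectorUnitary.2
  have hUr : U * star U = 1 := Matrix.mem_unitaryGroup_iff.mp hU
  have hUl : star U * U = 1 := Matrix.mem_unitaryGroup_iff'.mp hU
  have hUinv : U⁻¹ = star U := Matrix.inv_eq_right_inv hUr
  have hUisUnit : IsUnit U := ⟨⟨U, star U, hUr, hUl⟩, rfl⟩
  have hUUinv : U * U⁻¹ = 1 := by rw [hUinv]; exact hUr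
  have hUinvU : U⁻¹ * U = 1 := by rw [hUinv]; exact hUl
  have hspec : S = U * Matrix.diagonal lam * star U := by
    have h := hsym.spectral_theorem
    have hco : (RCLike.ofReal ∘ lam : Fin (m+1) → ℝ) = lam := by
      funext k; simp [RCLike.ofReal_real_eq_id]
    rw [hco] at h
    exact h
  have hspec' : S = U * Matrix.diagonal lam * U⁻¹ := by rw [hUinv]; exact hspec
  have hSU : S * U = U * Matrix.diagonal lam := by
    rw [hspec, Matrix.mul_assoc, Matrix.mul_assoc, hUl, Matrix.mul_one]
  have hconj : ∀ t : ℝ, -(t • S) = U * Matrix.diagonal (fun k => -(t * lam k)) * U⁻¹ := by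
    intro t
    have hd : Matrix.diagonal (fun k => -(t * lam k)) = -(t • Matrix.diagonal lam) := by
      ext i j
      rcases eq_or_ne i j with rfl | h
      · simp
      · simp [Matrix.diagonal_apply_ne _ h]
    rw [hd, Matrix.mul_neg, Matrix.neg_mul, Matrix.mul_smul, Matrix.smul_mul, ← hspec']
  have hexp : ∀ t : ℝ, NormedSpace.exp (-(t • S))
      = U * Matrix.diagonal (fun k => Real.exp (-(t * lam k))) * U⁻¹ := by
    intro t
    rw [hconj t, Matrix.exp_conj U _ hUisUnit, Matrix.exp_diagonal]
    congr 2
    rw [Pi.exp_def]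
    funext k
    rw [Real.exp_eq_exp_ℝ]
  set E : Fin (m+1) → ℝ := fun k => if lam k = 0 then 1 else 0 with hE
  set Q : Matrix (Fin (m+1)) (Fin (m+1)) ℝ := U * Matrix.diagonal E * U⁻¹ with hQ
  set z : Fin (m+1) → ℝ := U⁻¹ *ᵥ y with hz
  have hcoord : ∀ (g : Fin (m+1) → ℝ) (i : Fin (m+1)),
      ((U * Matrix.diagonal g * U⁻¹) *ᵥ y) i = ∑ k, U i k * (g k * z k) := by
    intro g i
    rw [← Matrix.mulVec_mulVec, ← Matrix.mulVec_mulVec]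
    have hdg : Matrix.diagonal g *ᵥ z = fun k => g k * z k := by
      funext k; rw [Matrix.mulVec_diagonal]
    rw [← hz, hdg]
    rfl
  have hSQv : S *ᵥ (Q *ᵥ y) = 0 := by
    rw [hQ, ← Matrix.mulVec_mulVec, ← Matrix.mulVec_mulVec, ← hz,
      Matrix.mulVec_mulVec, hSU, ← Matrix.mulVec_mulVec]
    have hzero : Matrix.diagonal lam *ᵥ (Matrix.diagonal E *ᵥ z) = 0 := by
      funext k
      rw [Matrix.mulVec_diagonal, Matrix.mulVec_diagonal]
      rcases eq_or_ne (lam k) 0 with h | h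
      · simp [h]
      · simp [hE, h]
    rw [hzero, Matrix.mulVec_zero]
  have hqconst := hker _ hSQv
  have hL : U⁻¹ * S = Matrix.diagonal lam * U⁻¹ := by
    rw [hspec', ← Matrix.mul_assoc, ← Matrix.mul_assoc, hUinvU, Matrix.one_mul]
  set u1 : Fin (m+1) → ℝ := U⁻¹ *ᵥ (fun _ => (1:ℝ)) with hu1
  have hD1 : Matrix.diagonal lam *ᵥ u1 = 0 := by
    rw [hu1, Matrix.mulVec_mulVec, ← hL, ← Matrix.mulVec_mulVec, h1, Matrix.mulVec_zero]
  have hEu : Matrix.diagonal E *ᵥ u1 = u1 := by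
    funext k
    rw [Matrix.mulVec_diagonal]
    rcases eq_or_ne (lam k) 0 with h | h
    · simp [hE, h]
    · have := congrFun hD1 k
      rw [Matrix.mulVec_diagonal] at this
      have hzk : u1 k = 0 := by
        rcases mul_eq_zero.mp this with h' | h'
        · exact absurd h' h
        · exact h'
      simp [hE, h, hzk]
  have hQ1 : Q *ᵥ (fun _ => (1:ℝ)) = (fun _ => (1:ℝ)) := by
    rw [hQ, ← Matrix.mulVec_mulVec, ← Matrix.mulVec_mulVec, ← hu1, hEu, hu1,
      Matrix.mulVec_mulVec, hUUinv, Matrix.one_mulVec]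
  have hstarT : star U = Uᵀ := by
    ext i j
    simp [Matrix.star_eq_conjTranspose, Matrix.conjTranspose_apply]
  have hQsym : Qᵀ = Q := by
    rw [hQ, hUinv, hstarT, Matrix.transpose_mul, Matrix.transpose_mul,
      Matrix.transpose_transpose, Matrix.diagonal_transpose, Matrix.mul_assoc]
  have hsumy : ∑ i, (Q *ᵥ y) i = ∑ j, y j := by
    have hd : ∑ i, (Q *ᵥ y) i = (fun _ => (1:ℝ)) ⬝ᵥ (Q *ᵥ y) := by
      simp [dotProduct]
    rw [hd, Matrix.dotProduct_mulVec, ← hQsym, Matrix.vecMul_transpose, hQ1]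
    simp [dotProduct]
  have hper : ∀ i, (Q *ᵥ y) i = (∑ j, y j) / ((m:ℝ)+1) := by
    intro i
    have hcount : ∑ j, (Q *ᵥ y) j = ((m:ℝ)+1) * (Q *ᵥ y) i := by
      rw [Finset.sum_congr rfl (fun j _ => hqconst j i)]
      rw [Finset.sum_const, Finset.card_univ, Fintype.card_fin, nsmul_eq_mul]
      push_cast
      ring
    rw [← hsumy, hcount]
    field_simp
  rw [tendsto_pi_nhds]
  intro i
  have hfun : (fun t : ℝ => (NormedSpace.exp (-(t • S)) *ᵥ y) i)
      = fun t => ∑ k, U i k * (Real.exp (-(t * lam k)) * z k) := by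
    funext t
    rw [hexp t, hcoord]
  rw [hfun]
  have hlim : (∑ j, y j) / ((m:ℝ)+1) = ∑ k, U i k * (E k * z k) := by
    rw [← hper i, hQ, hcoord]
  rw [hlim]
  apply tendsto_finset_sum
  intro k _
  rcases eq_or_ne (lam k) 0 with h | h
  · have : (fun t : ℝ => U i k * (Real.exp (-(t * lam k)) * z k))
        = fun _ => U i k * (E k * z k) := by
      funext t
      simp [h, hE]
    rw [this]
    exact tendsto_const_nhds
  · have hpos : 0 < lam k := lt_of_le_of_ne (hP.eigenvalues_nonneg k) (Ne.symm h)
    have hexp0 : Tendsto (fun t : ℝ => Real.exp (-(t * lam k))) atTop (nhds 0) :=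
      Real.tendsto_exp_atBot.comp (tendsto_neg_atTop_atBot.comp
        (Filter.Tendsto.atTop_mul_const hpos tendsto_id))
    have := (hexp0.mul (tendsto_const_nhds (x := z k))).const_mul (U i k)
    simpa [hE, h] using this

/-- `ẋ = −L̂·x` achieves signed-average consensus iff `G` is structurally
balanced. -/
theorem mirrorLap_signed_average_consensus (n : ℕ) (hn : 2 ≤ n)
    (A : Matrix (Fin n) (Fin n) ℝ)
    (hdiag : ∀ i, A i i = 0) (hdigon : ∀ i j, 0 ≤ A i j * A j i)
    (hsc : StronglyConnected A) :
    StructBalanced A ↔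
      ∃ σ : Fin n → ℝ, IsGauge σ ∧ (∀ i j, 0 ≤ σ i * A i j * σ j) ∧
        ∀ x₀ : Fin n → ℝ,
          Filter.Tendsto (fun t : ℝ => NormedSpace.exp (-(t • mirrorLap A)) *ᵥ x₀)
            Filter.atTop (nhds (fun i => ((∑ j, σ j * x₀ j) / (n : ℝ)) * σ i)) := by
  constructor
  · rintro ⟨σ, hσ, hpos⟩
    refine ⟨σ, hσ, hpos, ?_⟩
    obtain ⟨m, rfl⟩ : ∃ m, n = m + 1 := ⟨n - 1, by omega⟩
    intro x₀
    have hσsq : ∀ i, σ i * σ i = 1 := fun i => by rcases hσ i with h | h <;> rw [h] <;> norm_num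
    have hσne : ∀ i, σ i ≠ 0 := fun i => by rcases hσ i with h | h <;> rw [h] <;> norm_num
    have habs : ∀ i, |σ i| = 1 := fun i => by rcases hσ i with h | h <;> rw [h] <;> norm_num
    set B : Matrix (Fin (m+1)) (Fin (m+1)) ℝ := Matrix.of (fun i j => σ i * A i j * σ j) with hB
    have hBnn : ∀ i j, 0 ≤ B i j := fun i j => hpos i j
    have hBdiag : ∀ i, B i i = 0 := fun i => by simp [hB, hdiag i]
    have hBsc : StronglyConnected B := by
      intro i j hij
      refine Relation.TransGen.mono ?_ _ _ (hsc i j hij)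
      intro u v h
      show σ v * A v u * σ u ≠ 0
      exact mul_ne_zero (mul_ne_zero (hσne v) h) (hσne u)
    have habsB : ∀ i j, |B i j| = |A i j| := by
      intro i j
      simp [hB, abs_mul, habs]
    have hinDeg : inDeg B = inDeg A := by
      funext k; unfold inDeg; exact Finset.sum_congr rfl fun j _ => habsB k j
    have hlapBar : lapBar B = lapBar A := by
      unfold lapBar; rw [hinDeg]; congr 1; ext i j; exact habsB i j
    have hminor : minorDet B = minorDet A := by
      funext i; unfold minorDet; rw [hlapBar]
    have hW : Wmat B = Wmat A := by unfold Wmat; rw [hminor]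
    set D : Matrix (Fin (m+1)) (Fin (m+1)) ℝ := Matrix.diagonal σ with hD
    have hDT : Dᵀ = D := by rw [hD, Matrix.diagonal_transpose]
    have hDD : D * D = 1 := by
      ext i j
      rw [hD, Matrix.diagonal_mul, Matrix.one_apply]
      rcases eq_or_ne i j with rfl | h
      · rw [Matrix.diagonal_apply_eq, if_pos rfl, hσsq i]
      · rw [Matrix.diagonal_apply_ne _ h, mul_zero, if_neg h]
    have hDinv : D⁻¹ = D := Matrix.inv_eq_right_inv hDD
    have hDunit : IsUnit D := ⟨⟨D, D, hDD, hDD⟩, rfl⟩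
    have hBDAD : B = D * A * D := by
      ext i j
      rw [hD, Matrix.mul_diagonal, Matrix.diagonal_mul]
      rfl
    have hLB : lapOf B = D * lapOf A * D := by
      unfold lapOf
      rw [hinDeg, hBDAD, Matrix.mul_sub, Matrix.sub_mul]
      congr 1
      ext i j
      rw [hD, Matrix.mul_diagonal, Matrix.diagonal_mul]
      rcases eq_or_ne i j with rfl | h
      · rw [Matrix.diagonal_apply_eq, mul_right_comm, hσsq i, one_mul]
      · simp [Matrix.diagonal_apply_ne _ h]
    have hWD : Wmat A * D = D * Wmat A := by
      ext i j
      rw [hD]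
      unfold Wmat
      rw [Matrix.mul_diagonal, Matrix.diagonal_mul]
      rcases eq_or_ne i j with rfl | h
      · rw [Matrix.diagonal_apply_eq, mul_comm]
      · rw [Matrix.diagonal_apply_ne _ h, mul_zero, zero_mul]
    have hMB : mirrorLap B = D * mirrorLap A * D := by
      have habst : ∀ (Wm L : Matrix (Fin (m+1)) (Fin (m+1)) ℝ), Wm * D = D * Wm →
          (1/2:ℝ) • (Wm * (D * L * D) + (D * L * D)ᵀ * Wm)
            = D * ((1/2:ℝ) • (Wm * L + Lᵀ * Wm)) * D := by
        intro Wm L hWDc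
        rw [Matrix.transpose_mul, Matrix.transpose_mul, hDT, Matrix.mul_smul, Matrix.smul_mul]
        congr 1
        rw [Matrix.mul_add, Matrix.add_mul]
        congr 1
        · simp only [← Matrix.mul_assoc]
          rw [hWDc]
        · simp only [← Matrix.mul_assoc]
          rw [Matrix.mul_assoc (D * Lᵀ) D Wm, ← hWDc, ← Matrix.mul_assoc]
      rw [show mirrorLap B = (1/2:ℝ) • (Wmat B * lapOf B + (lapOf B)ᵀ * Wmat B) from rfl,
        show mirrorLap A = (1/2:ℝ) • (Wmat A * lapOf A + (lapOf A)ᵀ * Wmat A) from rfl,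
        hW, hLB]
      exact habst (Wmat A) (lapOf A) hWD
    have hMA : D * mirrorLap B * D = mirrorLap A := by
      rw [hMB]
      simp only [← Matrix.mul_assoc]
      rw [hDD, Matrix.one_mul, Matrix.mul_assoc, hDD, Matrix.mul_one]
    have hexpA : ∀ t : ℝ, NormedSpace.exp (-(t • mirrorLap A))
        = D * NormedSpace.exp (-(t • mirrorLap B)) * D⁻¹ := by
      intro t
      have h1 : -(t • mirrorLap A) = D * (-(t • mirrorLap B)) * D⁻¹ := by
        rw [hDinv, Matrix.mul_neg, Matrix.neg_mul, Matrix.mul_smul, Matrix.smul_mul, hMA]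
      rw [h1, Matrix.exp_conj D _ hDunit]
    have hy : D *ᵥ x₀ = fun j => σ j * x₀ j := by
      funext j
      rw [hD, Matrix.mulVec_diagonal]
    have hcore := tendsto_exp_core (mirrorLap_isHermitian B)
      (fun x => mirror_psd hBnn hBdiag hBsc x) (mirror_one hBnn hBsc)
      (fun x hx => mirror_ker hBnn hBdiag hBsc hx) (fun j => σ j * x₀ j)
    rw [tendsto_pi_nhds]
    intro i
    have hco : (fun t : ℝ => (NormedSpace.exp (-(t • mirrorLap A)) *ᵥ x₀) i)
        = fun t => σ i * ((NormedSpace.exp (-(t • mirrorLap B)) *ᵥ (fun j => σ j * x₀ j)) i) := by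
      funext t
      rw [hexpA t, hDinv, ← Matrix.mulVec_mulVec, ← Matrix.mulVec_mulVec, hy, hD,
        Matrix.mulVec_diagonal]
    rw [hco]
    have hlim := (tendsto_pi_nhds.mp hcore i).const_mul (σ i)
    have hval : ((∑ j, σ j * x₀ j) / ((m+1 : ℕ) : ℝ)) * σ i
        = σ i * ((∑ j, σ j * x₀ j) / ((m:ℝ)+1)) := by
      push_cast
      ring
    rw [hval]
    exact hlim
  · rintro ⟨σ, h1, h2, -⟩
    exact ⟨σ, h1, h2⟩
end

section
/- Let G be a strongly connected signed digraph. Then the signed network ẋ = −W·L·x achieves signed-average consensus if and only if G is structurally balanced; precisely: G is structurally balanced if and only if there exists a gauge transformation D with every entry of D·A·D nonnegative such that for every initial state x₀ ∈ ℝⁿ, the solution x(t) = exp(−t·W·L)·x₀ satisfies lim_{t→∞} x(t) = ((1_nᵀ·D·x₀)/n)·D·1_n, where 1_n is the all-ones vector in ℝⁿ. -/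
open Matrix BigOperators Filter

namespace WLSAC

variable {n : ℕ}

lemma lapBar_apply (A : Matrix (Fin n) (Fin n) ℝ) (i j : Fin n) :
    lapBar A i j = (if i = j then inDeg A i else 0) - |A i j| := by
  simp [lapBar, Matrix.diagonal_apply, Matrix.sub_apply]

lemma lapBar_row_sum (A : Matrix (Fin n) (Fin n) ℝ) (i : Fin n) :
    ∑ j, lapBar A i j = 0 := by
  simp [lapBar_apply, Finset.sum_sub_distrib, inDeg]

lemma det_updateRow_single_eq_minor (N : Matrix (Fin n) (Fin n) ℝ) (j : Fin n) :
    (N.updateRow j (Pi.single j 1)).det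
      = (N.submatrix (fun k : {l : Fin n // l ≠ j} => (k : Fin n))
          (fun k : {l : Fin n // l ≠ j} => (k : Fin n))).det := by
  classical
  haveI : Unique {l : Fin n // ¬ l ≠ j} :=
    ⟨⟨⟨j, by simp⟩⟩, by rintro ⟨x, hx⟩; simp only [ne_eq, not_not] at hx; subst hx; rfl⟩
  set e : {l : Fin n // l ≠ j} ⊕ {l : Fin n // ¬ l ≠ j} ≃ Fin n := Equiv.sumCompl _ with he
  rw [← Matrix.det_submatrix_equiv_self e]
  have hblock : (N.updateRow j (Pi.single j 1)).submatrix e e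
      = Matrix.fromBlocks
          (N.submatrix (fun k : {l : Fin n // l ≠ j} => (k : Fin n))
            (fun k : {l : Fin n // l ≠ j} => (k : Fin n)))
          (Matrix.of fun a (_ : {l : Fin n // ¬ l ≠ j}) => N (a : Fin n) j)
          0 1 := by
    ext a b
    cases a with
    | inl a =>
      cases b with
      | inl b =>
        have hb : (b : Fin n) ≠ j := b.2
        simp [he, Matrix.updateRow_ne a.2]
      | inr b =>
        have hb : (b : Fin n) = j := not_ne_iff.mp b.2
        simp [he, Matrix.updateRow_ne a.2, hb]
    | inr a =>
      have ha : (a : Fin n) = j := not_ne_iff.mp a.2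
      cases b with
      | inl b =>
        have hb : (b : Fin n) ≠ j := b.2
        simp [he, ha, Matrix.updateRow_self, Pi.single_apply, hb.symm]
      | inr b =>
        have hb : (b : Fin n) = j := not_ne_iff.mp b.2
        have : a = b := Subsingleton.elim a b
        simp [he, ha, hb, this, Matrix.updateRow_self, Pi.single_apply, Matrix.one_apply]
  rw [hblock, Matrix.det_fromBlocks_zero₂₁]
  simp

end WLSAC

namespace WLSAC
variable {n : ℕ}

lemma ones_ne_zero (hn : 0 < n) : (fun _ : Fin n => (1:ℝ)) ≠ 0 := by
  intro h
  have := congrFun h ⟨0, hn⟩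
  norm_num at this

lemma det_eq_zero_of_row_sums_zero (N : Matrix (Fin n) (Fin n) ℝ) (hn : 0 < n)
    (h : ∀ i, ∑ j, N i j = 0) : N.det = 0 := by
  rw [← Matrix.exists_mulVec_eq_zero_iff]
  refine ⟨fun _ => 1, ones_ne_zero hn, ?_⟩
  ext i
  simp [Matrix.mulVec, dotProduct, h i]

lemma det_lapBar_eq_zero (hn : 0 < n) (A : Matrix (Fin n) (Fin n) ℝ) :
    (lapBar A).det = 0 :=
  det_eq_zero_of_row_sums_zero _ hn (lapBar_row_sum A)

lemma adjugate_lapBar (hn : 0 < n) (A : Matrix (Fin n) (Fin n) ℝ) (i j : Fin n) :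
    Matrix.adjugate (lapBar A) i j = minorDet A j := by
  rw [Matrix.adjugate_apply]
  rcases eq_or_ne i j with rfl | hij
  · rw [det_updateRow_single_eq_minor]; rfl
  · have key : ((lapBar A).updateRow j (Pi.single i 1 - Pi.single j 1)).det = 0 := by
      apply det_eq_zero_of_row_sums_zero _ hn
      intro k
      rcases eq_or_ne k j with rfl | hkj
      · simp [Matrix.updateRow_self, Pi.sub_apply, Finset.sum_sub_distrib,
          Pi.single_apply]
      · simp only [Matrix.updateRow_ne hkj]
        exact lapBar_row_sum A k
    have expand : ((lapBar A).updateRow j (Pi.single i 1 - Pi.single j 1)).det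
        = ((lapBar A).updateRow j (Pi.single i 1)).det
          - ((lapBar A).updateRow j (Pi.single j 1)).det := by
      have h1 : (Pi.single i 1 - Pi.single j 1 : Fin n → ℝ)
          = Pi.single i 1 + (-1 : ℝ) • (Pi.single j 1 : Fin n → ℝ) := by
        ext k; simp [sub_eq_add_neg]
      rw [h1, Matrix.det_updateRow_add, Matrix.det_updateRow_smul]
      ring
    have := expand.symm.trans key
    have h2 : ((lapBar A).updateRow j (Pi.single i 1)).det
        = ((lapBar A).updateRow j (Pi.single j 1)).det := by linarith
    rw [h2, det_updateRow_single_eq_minor]; rfl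

lemma cofactor_identity (hn : 0 < n) (A : Matrix (Fin n) (Fin n) ℝ) (j : Fin n) :
    ∑ i, minorDet A i * lapBar A i j = 0 := by
  have h := Matrix.adjugate_mul (lapBar A)
  rw [det_lapBar_eq_zero hn A, zero_smul] at h
  have h2 := congrFun (congrFun h j) j
  rw [Matrix.mul_apply] at h2
  simp only [Matrix.zero_apply] at h2
  calc ∑ i, minorDet A i * lapBar A i j
      = ∑ i, Matrix.adjugate (lapBar A) j i * lapBar A i j := by
        refine Finset.sum_congr rfl fun i _ => ?_
        rw [adjugate_lapBar hn A j i]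
    _ = 0 := h2

end WLSAC

namespace WLSAC
variable {n : ℕ}

lemma lapBar_mulVec_apply (A : Matrix (Fin n) (Fin n) ℝ) (y : Fin n → ℝ) (k : Fin n) :
    (lapBar A *ᵥ y) k = ∑ j, |A k j| * (y k - y j) := by
  simp only [Matrix.mulVec, dotProduct, lapBar_apply, sub_mul, mul_sub,
    Finset.sum_sub_distrib, ite_mul, zero_mul]
  rw [Finset.sum_ite_eq Finset.univ k (fun j => inDeg A k * y j)]
  simp [inDeg, Finset.sum_mul]

lemma maxPrinciple (A : Matrix (Fin n) (Fin n) ℝ) (hsc : StronglyConnected A)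
    {t : ℝ} (ht : 0 ≤ t) {i : Fin n} {y : Fin n → ℝ} (hyi : y i = 0)
    (heq : ∀ k, k ≠ i → t * y k + ∑ j, |A k j| * (y k - y j) = 0) :
    ∀ k, y k ≤ 0 := by
  obtain ⟨k₀, -, hmax⟩ := Finset.exists_max_image Finset.univ y ⟨i, Finset.mem_univ i⟩
  rcases le_or_gt (y k₀) 0 with h0 | h0
  · exact fun k => (hmax k (Finset.mem_univ k)).trans h0
  · exfalso
    have step : ∀ c, y c = y k₀ → ∀ b, A c b ≠ 0 → y b = y k₀ := by
      intro c hc b hb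
      have hci : c ≠ i := by
        intro h; rw [h, hyi] at hc; exact absurd hc.symm (ne_of_gt h0)
      have hc' := heq c hci
      have hnonneg : ∀ j ∈ Finset.univ, 0 ≤ |A c j| * (y c - y j) := by
        intro j _
        have := hmax j (Finset.mem_univ j)
        have : 0 ≤ y c - y j := by rw [hc]; linarith
        positivity
      have hsum0 : ∑ j, |A c j| * (y c - y j) = 0 := by
        have h1 : 0 ≤ t * y c := by rw [hc]; positivity
        have h2 : 0 ≤ ∑ j, |A c j| * (y c - y j) := Finset.sum_nonneg hnonneg
        linarith
      have := (Finset.sum_eq_zero_iff_of_nonneg hnonneg).mp hsum0 b (Finset.mem_univ b)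
      have habs : |A c b| ≠ 0 := fun h => hb (abs_eq_zero.mp h)
      have : y c - y b = 0 := by
        rcases mul_eq_zero.mp this with h | h
        · exact absurd h habs
        · exact h
      rw [← hc]; linarith
    have key : ∀ v, Relation.TransGen (fun u v => A v u ≠ 0) i v → y v ≠ y k₀ := by
      intro v h
      induction h with
      | single hb =>
        intro hv
        have := step _ hv _ hb
        rw [hyi] at this; exact absurd this.symm (ne_of_gt h0)
      | tail hab hbc ih =>
        intro hv
        exact ih (step _ hv _ hbc)
    have hik : i ≠ k₀ := by
      intro h; rw [← h, hyi] at h0; exact lt_irrefl 0 h0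
    exact key k₀ (hsc i k₀ hik) rfl

lemma ker_trivial (A : Matrix (Fin n) (Fin n) ℝ) (hsc : StronglyConnected A)
    {t : ℝ} (ht : 0 ≤ t) (i : Fin n) {y : Fin n → ℝ} (hyi : y i = 0)
    (heq : ∀ k, k ≠ i → t * y k + (lapBar A *ᵥ y) k = 0) : y = 0 := by
  have heq' : ∀ k, k ≠ i → t * y k + ∑ j, |A k j| * (y k - y j) = 0 := by
    intro k hk; rw [← lapBar_mulVec_apply]; exact heq k hk
  have h1 := maxPrinciple A hsc ht hyi heq'
  have h2 : ∀ k, -y k ≤ 0 := by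
    apply maxPrinciple A hsc ht (y := -y) (i := i) (by simp [hyi])
    intro k hk
    have := heq' k hk
    have hrw : ∑ j, |A k j| * (-y k - -y j) = -∑ j, |A k j| * (y k - y j) := by
      rw [← Finset.sum_neg_distrib]
      refine Finset.sum_congr rfl fun j _ => by ring
    simp only [Pi.neg_apply]
    rw [hrw]; linarith
  ext k
  have := h2 k
  have := h1 k
  simp only [Pi.zero_apply]
  linarith

end WLSAC

namespace WLSAC
variable {n : ℕ}

lemma det_tI_add_minor_ne_zero (A : Matrix (Fin n) (Fin n) ℝ) (hsc : StronglyConnected A)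
    (i : Fin n) {t : ℝ} (ht : 0 ≤ t) :
    (t • (1 : Matrix {l : Fin n // l ≠ i} {l : Fin n // l ≠ i} ℝ)
      + (lapBar A).submatrix (fun k : {l : Fin n // l ≠ i} => (k : Fin n))
        (fun k : {l : Fin n // l ≠ i} => (k : Fin n))).det ≠ 0 := by
  intro hdet
  obtain ⟨v, hv, hker⟩ := Matrix.exists_mulVec_eq_zero_iff.mpr hdet
  set y : Fin n → ℝ := fun j => if h : j = i then 0 else v ⟨j, h⟩ with hy
  have hyi : y i = 0 := by simp [hy]
  have hyv : ∀ b : {l : Fin n // l ≠ i}, y (b : Fin n) = v b := by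
    intro b; simp [hy, b.2]
  have heq : ∀ k, k ≠ i → t * y k + (lapBar A *ᵥ y) k = 0 := by
    intro k hk
    have h0 := congrFun hker ⟨k, hk⟩
    simp only [Matrix.add_mulVec, Matrix.smul_mulVec, Matrix.one_mulVec,
      Pi.add_apply, Pi.smul_apply, smul_eq_mul, Pi.zero_apply] at h0
    have hsum : (lapBar A *ᵥ y) k
        = ((lapBar A).submatrix (fun k : {l : Fin n // l ≠ i} => (k : Fin n))
            (fun k : {l : Fin n // l ≠ i} => (k : Fin n)) *ᵥ v) ⟨k, hk⟩ := by
      simp only [Matrix.mulVec, dotProduct, Matrix.submatrix_apply]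
      have hmem : ∀ x : Fin n, x ∈ Finset.univ.erase i ↔ x ≠ i := by
        intro x; simp [Finset.mem_erase]
      have hstep : ∑ x : {l : Fin n // l ≠ i}, lapBar A k (x : Fin n) * v x
          = ∑ x ∈ Finset.univ.erase i, lapBar A k x * y x := by
        rw [Finset.sum_subtype (Finset.univ.erase i) hmem
          (fun j => lapBar A k j * y j)]
        refine Finset.sum_congr rfl fun x _ => by rw [hyv x]
      rw [hstep, ← Finset.add_sum_erase _ _ (Finset.mem_univ i), hyi, mul_zero, zero_add]
    rw [hsum]
    have hyk : y k = v ⟨k, hk⟩ := hyv ⟨k, hk⟩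
    rw [hyk]
    exact h0
  have hy0 := ker_trivial A hsc ht i hyi heq
  apply hv
  ext b
  have : y (b : Fin n) = 0 := by rw [hy0]; rfl
  rw [← hyv b, this]; rfl

end WLSAC

namespace WLSAC
variable {n : ℕ}

lemma minorDet_pos (A : Matrix (Fin n) (Fin n) ℝ) (hsc : StronglyConnected A)
    (i : Fin n) : 0 < minorDet A i := by
  classical
  set C : Matrix {l : Fin n // l ≠ i} {l : Fin n // l ≠ i} ℝ :=
    (lapBar A).submatrix (fun k : {l : Fin n // l ≠ i} => (k : Fin n))
      (fun k : {l : Fin n // l ≠ i} => (k : Fin n)) with hC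
  set g : ℝ → ℝ := fun t => (t • (1 : Matrix {l : Fin n // l ≠ i} {l : Fin n // l ≠ i} ℝ) + C).det
    with hgdef
  have hg : Continuous g := by
    apply Continuous.matrix_det
    exact (continuous_id.smul continuous_const).add continuous_const
  have hne : ∀ t : ℝ, 0 ≤ t → g t ≠ 0 := fun t ht =>
    det_tI_add_minor_ne_zero A hsc i ht
  have hcont2 : Continuous fun s : ℝ =>
      ((1 : Matrix {l : Fin n // l ≠ i} {l : Fin n // l ≠ i} ℝ) + s • C).det := by
    apply Continuous.matrix_det
    exact continuous_const.add (continuous_id.smul continuous_const)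
  have hlim : Filter.Tendsto
      (fun t : ℝ => ((1 : Matrix {l : Fin n // l ≠ i} {l : Fin n // l ≠ i} ℝ) + t⁻¹ • C).det)
      Filter.atTop (nhds 1) := by
    have h1 := (hcont2.tendsto 0).comp tendsto_inv_atTop_zero
    simpa [Function.comp_def] using h1
  have hev : ∀ᶠ t : ℝ in Filter.atTop,
      0 < ((1 : Matrix {l : Fin n // l ≠ i} {l : Fin n // l ≠ i} ℝ) + t⁻¹ • C).det ∧ 0 < t := by
    filter_upwards [hlim.eventually (eventually_gt_nhds zero_lt_one),
      Filter.eventually_gt_atTop 0] with t h1 h2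
    exact ⟨h1, h2⟩
  obtain ⟨T, hT1, hT2⟩ := hev.exists
  have hgT : 0 < g T := by
    have hrw : T • (1 : Matrix {l : Fin n // l ≠ i} {l : Fin n // l ≠ i} ℝ) + C
        = T • ((1 : Matrix {l : Fin n // l ≠ i} {l : Fin n // l ≠ i} ℝ) + T⁻¹ • C) := by
      rw [smul_add, smul_smul, mul_inv_cancel₀ (ne_of_gt hT2), one_smul]
    rw [hgdef]
    simp only [hrw, Matrix.det_smul]
    exact mul_pos (pow_pos hT2 _) hT1
  have hg0 : g 0 = minorDet A i := by
    simp [hgdef, minorDet, hC]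
  rcases lt_trichotomy (g 0) 0 with h | h | h
  · exfalso
    have hmem : (0:ℝ) ∈ Set.Icc (g 0) (g T) := ⟨le_of_lt h, le_of_lt hgT⟩
    obtain ⟨t, ht, hgt⟩ := intermediate_value_Icc (le_of_lt hT2) hg.continuousOn hmem
    exact hne t ht.1 hgt
  · exact absurd h (hne 0 le_rfl)
  · rw [← hg0]; exact h

end WLSAC

namespace WLSAC
variable {n : ℕ}

lemma cofactor_identity' (hn : 0 < n) (A : Matrix (Fin n) (Fin n) ℝ) (j : Fin n) :
    ∑ i, minorDet A i * |A i j| = minorDet A j * inDeg A j := by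
  have h := cofactor_identity hn A j
  simp only [lapBar_apply, mul_sub, mul_ite, mul_zero] at h
  rw [Finset.sum_sub_distrib, Finset.sum_ite_eq' Finset.univ j
    (fun i => minorDet A i * inDeg A i)] at h
  simp only [Finset.mem_univ, if_true] at h
  linarith

lemma mulVec_M_apply (A : Matrix (Fin n) (Fin n) ℝ) (x : Fin n → ℝ) (i : Fin n) :
    ((Wmat A * lapBar A) *ᵥ x) i = ∑ j, minorDet A i * lapBar A i j * x j := by
  simp only [Matrix.mulVec, dotProduct, Wmat]
  refine Finset.sum_congr rfl fun j _ => ?_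
  rw [Matrix.diagonal_mul]

lemma quad_form (hn : 0 < n) (A : Matrix (Fin n) (Fin n) ℝ) (x : Fin n → ℝ) :
    ∑ i, x i * ((Wmat A * lapBar A) *ᵥ x) i
      = (1/2) * ∑ i, ∑ j, minorDet A i * |A i j| * (x i - x j)^2 := by
  have lhs_eq : ∑ i, x i * ((Wmat A * lapBar A) *ᵥ x) i
      = ∑ i, minorDet A i * inDeg A i * (x i * x i)
        - ∑ i, ∑ j, minorDet A i * |A i j| * (x i * x j) := by
    rw [← Finset.sum_sub_distrib]
    refine Finset.sum_congr rfl fun i _ => ?_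
    rw [mulVec_M_apply, Finset.mul_sum]
    have hterm : ∀ j, x i * (minorDet A i * lapBar A i j * x j)
        = (if i = j then minorDet A i * inDeg A i * (x i * x j) else 0)
          - minorDet A i * |A i j| * (x i * x j) := by
      intro j
      rw [lapBar_apply]
      by_cases h : i = j <;> simp [h] <;> ring
    simp_rw [hterm]
    rw [Finset.sum_sub_distrib, Finset.sum_ite_eq Finset.univ i
      (fun j => minorDet A i * inDeg A i * (x i * x j))]
    simp
  have hP : ∑ i, ∑ j, minorDet A i * |A i j| * (x i * x i)
      = ∑ i, minorDet A i * inDeg A i * (x i * x i) := by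
    refine Finset.sum_congr rfl fun i _ => ?_
    rw [← Finset.sum_mul]
    congr 1
    rw [← Finset.mul_sum]
    rfl
  have hQ : ∑ i, ∑ j, minorDet A i * |A i j| * (x j * x j)
      = ∑ i, minorDet A i * inDeg A i * (x i * x i) := by
    rw [Finset.sum_comm]
    refine Finset.sum_congr rfl fun j _ => ?_
    rw [← Finset.sum_mul, cofactor_identity' hn A j]
  have rhs_eq : ∑ i, ∑ j, minorDet A i * |A i j| * (x i - x j)^2
      = ∑ i, ∑ j, minorDet A i * |A i j| * (x i * x i)
        + ∑ i, ∑ j, minorDet A i * |A i j| * (x j * x j)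
        - 2 * ∑ i, ∑ j, minorDet A i * |A i j| * (x i * x j) := by
    have hterm : ∀ i j, minorDet A i * |A i j| * (x i - x j)^2
        = minorDet A i * |A i j| * (x i * x i) + minorDet A i * |A i j| * (x j * x j)
          - 2 * (minorDet A i * |A i j| * (x i * x j)) := fun i j => by ring
    simp_rw [hterm, Finset.sum_sub_distrib, Finset.sum_add_distrib, ← Finset.mul_sum]
  rw [lhs_eq, rhs_eq, hP, hQ]
  ring

end WLSAC

namespace WLSAC
variable {n : ℕ}

lemma quad_nonneg (hn : 0 < n) (A : Matrix (Fin n) (Fin n) ℝ) (hsc : StronglyConnected A)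
    (x : Fin n → ℝ) : 0 ≤ ∑ i, x i * ((Wmat A * lapBar A) *ᵥ x) i := by
  rw [quad_form hn A x]
  have : 0 ≤ ∑ i, ∑ j, minorDet A i * |A i j| * (x i - x j)^2 := by
    refine Finset.sum_nonneg fun i _ => Finset.sum_nonneg fun j _ => ?_
    have := le_of_lt (minorDet_pos A hsc i)
    positivity
  linarith

lemma quad_pos (hn : 0 < n) (A : Matrix (Fin n) (Fin n) ℝ) (hsc : StronglyConnected A)
    {x : Fin n → ℝ} (hsum : ∑ i, x i = 0) (hx : x ≠ 0) :
    0 < ∑ i, x i * ((Wmat A * lapBar A) *ᵥ x) i := by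
  rcases lt_or_eq_of_le (quad_nonneg hn A hsc x) with h | h
  · exact h
  exfalso
  rw [quad_form hn A x] at h
  have hnn : ∀ i ∈ Finset.univ, (0:ℝ) ≤ ∑ j, minorDet A i * |A i j| * (x i - x j)^2 := by
    intro i _
    refine Finset.sum_nonneg fun j _ => ?_
    have := le_of_lt (minorDet_pos A hsc i)
    positivity
  have hsum0 : ∑ i, ∑ j, minorDet A i * |A i j| * (x i - x j)^2 = 0 := by linarith
  have hallzero : ∀ i j, minorDet A i * |A i j| * (x i - x j)^2 = 0 := by
    intro i j
    have h1 := (Finset.sum_eq_zero_iff_of_nonneg hnn).mp hsum0 i (Finset.mem_univ i)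
    have hnn2 : ∀ j ∈ Finset.univ, (0:ℝ) ≤ minorDet A i * |A i j| * (x i - x j)^2 := by
      intro j _
      have := le_of_lt (minorDet_pos A hsc i)
      positivity
    exact (Finset.sum_eq_zero_iff_of_nonneg hnn2).mp h1 j (Finset.mem_univ j)
  have hedge : ∀ u v : Fin n, A v u ≠ 0 → x v = x u := by
    intro u v huv
    have h1 := hallzero v u
    have h2 : minorDet A v ≠ 0 := ne_of_gt (minorDet_pos A hsc v)
    have h3 : |A v u| ≠ 0 := fun h => huv (abs_eq_zero.mp h)
    have h4 : (x v - x u)^2 = 0 := by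
      rcases mul_eq_zero.mp h1 with h | h
      · rcases mul_eq_zero.mp h with h | h
        · exact absurd h h2
        · exact absurd h h3
      · exact h
    have := pow_eq_zero_iff (n := 2) (by norm_num) |>.mp h4
    linarith
  have hconst' : ∀ i j : Fin n, Relation.TransGen (fun u v => A v u ≠ 0) i j → x i = x j := by
    intro i j hpath
    induction hpath with
    | single hb => exact (hedge _ _ hb).symm
    | tail hab hbc ih => exact ih.trans (hedge _ _ hbc).symm
  have hconst : ∀ i j : Fin n, x i = x j := fun i j =>
    (eq_or_ne i j).elim (fun h => by rw [h]) (fun h => hconst' i j (hsc i j h))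
  apply hx
  ext k
  have hcn : ∑ i : Fin n, x i = (n : ℝ) * x k := by
    rw [Finset.sum_congr rfl fun i _ => hconst i k]
    simp [Finset.card_univ, mul_comm]
  rw [hcn] at hsum
  have hn' : (n : ℝ) ≠ 0 := by positivity
  simpa using (mul_eq_zero.mp hsum).resolve_left hn'

end WLSAC

namespace WLSAC
variable {n : ℕ}

lemma quad_continuous (A : Matrix (Fin n) (Fin n) ℝ) :
    Continuous fun x : Fin n → ℝ => ∑ i, x i * ((Wmat A * lapBar A) *ᵥ x) i := by
  refine continuous_finset_sum _ fun i _ => (continuous_apply i).mul ?_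
  have : (fun x : Fin n → ℝ => ((Wmat A * lapBar A) *ᵥ x) i)
      = fun x => ∑ j, (Wmat A * lapBar A) i j * x j := by
    ext x; rfl
  rw [this]
  exact continuous_finset_sum _ fun j _ => continuous_const.mul (continuous_apply j)

lemma rayleigh (hn : 2 ≤ n) (A : Matrix (Fin n) (Fin n) ℝ) (hsc : StronglyConnected A) :
    ∃ c : ℝ, 0 < c ∧ ∀ x : Fin n → ℝ, ∑ i, x i = 0 →
      c * ∑ i, x i * x i ≤ ∑ i, x i * ((Wmat A * lapBar A) *ᵥ x) i := by
  have hn0 : 0 < n := lt_of_lt_of_le two_pos hn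
  set g : (Fin n → ℝ) → ℝ := fun x => ∑ i, x i * ((Wmat A * lapBar A) *ᵥ x) i with hg
  set K : Set (Fin n → ℝ) := {x | ∑ i, x i = 0 ∧ ∑ i, x i * x i = 1} with hK
  have hKclosed : IsClosed K := by
    have h1 : IsClosed {x : Fin n → ℝ | ∑ i, x i = 0} :=
      isClosed_eq (continuous_finset_sum _ fun i _ => continuous_apply i) continuous_const
    have h2 : IsClosed {x : Fin n → ℝ | ∑ i, x i * x i = 1} :=
      isClosed_eq (continuous_finset_sum _ fun i _ =>
        (continuous_apply i).mul (continuous_apply i)) continuous_const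
    exact h1.inter h2
  have hKbdd : Bornology.IsBounded K := by
    apply Bornology.IsBounded.subset (Metric.isBounded_closedBall (x := (0 : Fin n → ℝ)) (r := 1))
    intro x hx
    simp only [Metric.mem_closedBall, dist_zero_right]
    rw [pi_norm_le_iff_of_nonneg zero_le_one]
    intro i
    rw [Real.norm_eq_abs]
    apply abs_le_one_iff_mul_self_le_one.mpr
    calc x i * x i ≤ ∑ j, x j * x j :=
          Finset.single_le_sum (fun j _ => mul_self_nonneg (x j)) (Finset.mem_univ i)
    _ = 1 := hx.2
  have hKcompact : IsCompact K := Metric.isCompact_of_isClosed_isBounded hKclosed hKbdd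
  have hKne : K.Nonempty := by
    have h01 : (0 : ℕ) < n := hn0
    have h11 : (1 : ℕ) < n := hn
    set i0 : Fin n := ⟨0, h01⟩
    set i1 : Fin n := ⟨1, h11⟩
    have hne : i0 ≠ i1 := by simp [i0, i1, Fin.ext_iff]
    set s : ℝ := Real.sqrt (1/2) with hs
    have hs2 : s * s = 1/2 := Real.mul_self_sqrt (by norm_num)
    refine ⟨(Pi.single i0 s - Pi.single i1 s : Fin n → ℝ), ?_, ?_⟩
    · show ∑ i, (Pi.single i0 s - Pi.single i1 s : Fin n → ℝ) i = 0
      simp only [Pi.sub_apply]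
      rw [Finset.sum_sub_distrib, Finset.sum_pi_single', Finset.sum_pi_single']
      simp
    · have hpt : ∀ k, ((Pi.single i0 s - Pi.single i1 s : Fin n → ℝ) k)
          * ((Pi.single i0 s - Pi.single i1 s : Fin n → ℝ) k)
          = (Pi.single i0 (s*s) : Fin n → ℝ) k + (Pi.single i1 (s*s) : Fin n → ℝ) k := by
        intro k
        rcases eq_or_ne k i0 with rfl | h0
        · simp [Pi.single_apply, hne.symm, Ne.symm hne]
        · rcases eq_or_ne k i1 with rfl | h1
          · simp [Pi.single_apply, Ne.symm hne, hne]
          · simp [Pi.single_apply, Ne.symm h0, Ne.symm h1]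
      show ∑ k, (Pi.single i0 s - Pi.single i1 s : Fin n → ℝ) k
          * (Pi.single i0 s - Pi.single i1 s : Fin n → ℝ) k = 1
      simp only [hpt]
      rw [Finset.sum_add_distrib, Finset.sum_pi_single', Finset.sum_pi_single']
      simp [hs2]
      norm_num
  obtain ⟨xm, hxmK, hxmin⟩ := hKcompact.exists_isMinOn hKne (quad_continuous A).continuousOn
  set c : ℝ := g xm with hc
  have hxm0 : xm ≠ 0 := by
    intro h
    have := hxmK.2
    rw [h] at this
    simp at this
  have hcpos : 0 < c := quad_pos hn0 A hsc hxmK.1 hxm0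
  refine ⟨c, hcpos, ?_⟩
  intro x hxsum
  rcases eq_or_ne x 0 with rfl | hx0
  · simp [hg]
  have hsq : 0 < ∑ i, x i * x i := by
    rcases (Finset.sum_nonneg (fun i (_ : i ∈ Finset.univ) => mul_self_nonneg (x i))).lt_or_eq
      with h | h
    · exact h
    exfalso
    apply hx0
    ext i
    have := (Finset.sum_eq_zero_iff_of_nonneg
      (fun i (_ : i ∈ Finset.univ) => mul_self_nonneg (x i))).mp h.symm i (Finset.mem_univ i)
    simpa using mul_self_eq_zero.mp this
  set r : ℝ := Real.sqrt (∑ i, x i * x i) with hr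
  have hrpos : 0 < r := Real.sqrt_pos.mpr hsq
  have hr2 : r * r = ∑ i, x i * x i := Real.mul_self_sqrt (le_of_lt hsq)
  set u : Fin n → ℝ := r⁻¹ • x with hu
  have huK : u ∈ K := by
    constructor
    · simp only [hu, Pi.smul_apply, smul_eq_mul, ← Finset.mul_sum, hxsum, mul_zero]
    · simp only [hu, Pi.smul_apply, smul_eq_mul]
      have : ∀ i, r⁻¹ * x i * (r⁻¹ * x i) = r⁻¹ * r⁻¹ * (x i * x i) := fun i => by ring
      simp only [this]
      rw [← Finset.mul_sum, ← hr2]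
      field_simp
  have hgu : g u = r⁻¹ * r⁻¹ * g x := by
    simp only [hg, hu]
    rw [Finset.mul_sum]
    refine Finset.sum_congr rfl fun i _ => ?_
    rw [Matrix.mulVec_smul]
    simp only [Pi.smul_apply, smul_eq_mul]
    ring
  have hle : g xm ≤ g u := hxmin huK
  rw [hgu] at hle
  have h1 : c * (r * r) ≤ r⁻¹ * r⁻¹ * g x * (r * r) := by
    apply mul_le_mul_of_nonneg_right hle (by positivity)
  have h2 : r⁻¹ * r⁻¹ * g x * (r * r) = g x := by
    field_simp
  rw [h2, hr2] at h1
  exact h1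

end WLSAC

namespace WLSAC
variable {n : ℕ}

lemma exp_mulVec_of_mulVec_eq_zero (N : Matrix (Fin n) (Fin n) ℝ) (v : Fin n → ℝ)
    (h : N *ᵥ v = 0) : NormedSpace.exp N *ᵥ v = v := by
  letI : SeminormedRing (Matrix (Fin n) (Fin n) ℝ) := Matrix.linftyOpSemiNormedRing
  letI : NormedRing (Matrix (Fin n) (Fin n) ℝ) := Matrix.linftyOpNormedRing
  letI : NormedAlgebra ℝ (Matrix (Fin n) (Fin n) ℝ) := Matrix.linftyOpNormedAlgebra
  have hpow : ∀ k : ℕ, k ≠ 0 → N ^ k *ᵥ v = 0 := by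
    intro k hk
    induction k with
    | zero => exact absurd rfl hk
    | succ m ih =>
      rw [pow_succ, ← Matrix.mulVec_mulVec, h, Matrix.mulVec_zero]
  have hsummable : Summable (fun k : ℕ => ((k.factorial : ℝ))⁻¹ • N ^ k) :=
    NormedSpace.expSeries_summable' (𝕂 := ℝ) N
  set L : Matrix (Fin n) (Fin n) ℝ →ₗ[ℝ] (Fin n → ℝ) :=
    { toFun := fun M => M *ᵥ v
      map_add' := fun a b => Matrix.add_mulVec a b v
      map_smul' := fun c a => Matrix.smul_mulVec c a v } with hL
  set Lc : Matrix (Fin n) (Fin n) ℝ →L[ℝ] (Fin n → ℝ) := LinearMap.toContinuousLinearMap L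
    with hLc
  have hLcapp : ∀ M : Matrix (Fin n) (Fin n) ℝ, Lc M = M *ᵥ v := fun M => rfl
  rw [NormedSpace.exp_eq_tsum ℝ]
  have hmap := Lc.map_tsum hsummable
  calc (∑' k : ℕ, ((k.factorial : ℝ))⁻¹ • N ^ k) *ᵥ v
      = Lc (∑' k : ℕ, ((k.factorial : ℝ))⁻¹ • N ^ k) := (hLcapp _).symm
    _ = ∑' k : ℕ, Lc (((k.factorial : ℝ))⁻¹ • N ^ k) := hmap
    _ = v := by
        rw [tsum_eq_single 0]
        · simp [hLcapp]
        · intro k hk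
          rw [Lc.map_smul, hLcapp, hpow k hk, smul_zero]

lemma exp_neg_smul_mulVec_fixed (M : Matrix (Fin n) (Fin n) ℝ) {v : Fin n → ℝ}
    (h : M *ᵥ v = 0) (t : ℝ) : NormedSpace.exp (-(t • M)) *ᵥ v = v := by
  apply exp_mulVec_of_mulVec_eq_zero
  rw [Matrix.neg_mulVec, Matrix.smul_mulVec, h, smul_zero, neg_zero]

lemma exp_sum_invariant (M : Matrix (Fin n) (Fin n) ℝ) (hcol : ∀ j, ∑ i, M i j = 0)
    (t : ℝ) (z : Fin n → ℝ) :
    ∑ i, (NormedSpace.exp (-(t • M)) *ᵥ z) i = ∑ i, z i := by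
  have hMT : (-(t • M))ᵀ *ᵥ (fun _ => (1:ℝ)) = 0 := by
    ext j
    simp only [Matrix.mulVec, dotProduct, Matrix.transpose_apply, Matrix.neg_apply,
      Matrix.smul_apply, smul_eq_mul, Pi.zero_apply, mul_one]
    have : ∀ x, -(t * M x j) = -t * M x j := fun x => by ring
    simp only [this]
    rw [← Finset.mul_sum, hcol j, mul_zero]
  have hET := exp_mulVec_of_mulVec_eq_zero _ _ hMT
  rw [Matrix.exp_transpose] at hET
  have hcolE : ∀ j, ∑ i, NormedSpace.exp (-(t • M)) i j = 1 := by
    intro j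
    have := congrFun hET j
    simpa [Matrix.mulVec, dotProduct, Matrix.transpose_apply] using this
  calc ∑ i, (NormedSpace.exp (-(t • M)) *ᵥ z) i
      = ∑ i, ∑ j, NormedSpace.exp (-(t • M)) i j * z j := rfl
    _ = ∑ j, (∑ i, NormedSpace.exp (-(t • M)) i j) * z j := by
        rw [Finset.sum_comm]
        exact Finset.sum_congr rfl fun j _ => (Finset.sum_mul _ _ _).symm
    _ = ∑ j, z j := by
        refine Finset.sum_congr rfl fun j _ => ?_
        rw [hcolE j, one_mul]

end WLSAC

namespace WLSAC
variable {n : ℕ}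

lemma M_apply (A : Matrix (Fin n) (Fin n) ℝ) (i j : Fin n) :
    (Wmat A * lapBar A) i j = minorDet A i * lapBar A i j := by
  simp only [Wmat]
  rw [Matrix.diagonal_mul]

lemma M_col_sum (hn : 0 < n) (A : Matrix (Fin n) (Fin n) ℝ) (j : Fin n) :
    ∑ i, (Wmat A * lapBar A) i j = 0 := by
  calc ∑ i, (Wmat A * lapBar A) i j = ∑ i, minorDet A i * lapBar A i j :=
        Finset.sum_congr rfl fun i _ => M_apply A i j
    _ = 0 := cofactor_identity hn A j

lemma M_row_sum (A : Matrix (Fin n) (Fin n) ℝ) (i : Fin n) :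
    ∑ j, (Wmat A * lapBar A) i j = 0 := by
  calc ∑ j, (Wmat A * lapBar A) i j = ∑ j, minorDet A i * lapBar A i j :=
        Finset.sum_congr rfl fun j _ => M_apply A i j
    _ = minorDet A i * ∑ j, lapBar A i j := by rw [Finset.mul_sum]
    _ = 0 := by rw [lapBar_row_sum, mul_zero]

lemma exp_decay (hn : 2 ≤ n) (A : Matrix (Fin n) (Fin n) ℝ) (hsc : StronglyConnected A)
    {z : Fin n → ℝ} (hz : ∑ i, z i = 0) :
    Filter.Tendsto (fun t : ℝ => NormedSpace.exp (-(t • (Wmat A * lapBar A))) *ᵥ z)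
      Filter.atTop (nhds 0) := by
  classical
  letI : SeminormedRing (Matrix (Fin n) (Fin n) ℝ) := Matrix.linftyOpSemiNormedRing
  letI : NormedRing (Matrix (Fin n) (Fin n) ℝ) := Matrix.linftyOpNormedRing
  letI : NormedAlgebra ℝ (Matrix (Fin n) (Fin n) ℝ) := Matrix.linftyOpNormedAlgebra
  have hn0 : 0 < n := lt_of_lt_of_le two_pos hn
  set M : Matrix (Fin n) (Fin n) ℝ := Wmat A * lapBar A with hM
  set x : ℝ → (Fin n → ℝ) := fun t => NormedSpace.exp (-(t • M)) *ᵥ z with hxdef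
  have hxalt : ∀ t : ℝ, x t = NormedSpace.exp (t • (-M)) *ᵥ z := by
    intro t; rw [hxdef]; rw [smul_neg]
  have hsum : ∀ t : ℝ, ∑ i, x t i = 0 := by
    intro t
    rw [hxdef]
    rw [exp_sum_invariant M (M_col_sum hn0 A) t z]
    exact hz
  -- coordinatewise derivative
  have hx' : ∀ (t : ℝ) (i : Fin n),
      HasDerivAt (fun s : ℝ => x s i) (((-M) *ᵥ x t) i) t := by
    intro t i
    have hexp := hasDerivAt_exp_smul_const (𝕂 := ℝ) (-M) t
    set Li : Matrix (Fin n) (Fin n) ℝ →ₗ[ℝ] ℝ :=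
      { toFun := fun N => (N *ᵥ z) i
        map_add' := fun a b => by
          show ((a + b) *ᵥ z) i = (a *ᵥ z) i + (b *ᵥ z) i
          rw [Matrix.add_mulVec]; rfl
        map_smul' := fun c a => by
          show ((c • a) *ᵥ z) i = c • (a *ᵥ z) i
          rw [Matrix.smul_mulVec]; rfl } with hLi
    have hcomp := (LinearMap.toContinuousLinearMap Li).hasFDerivAt.comp_hasDerivAt t hexp
    have hc : Commute (-M) (t • (-M)) := (Commute.refl (-M)).smul_right t
    have hcommE : (-M) * NormedSpace.exp (t • (-M))
        = NormedSpace.exp (t • (-M)) * (-M) := hc.exp_right.eq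
    have hval : (LinearMap.toContinuousLinearMap Li) (NormedSpace.exp (t • (-M)) * (-M))
        = ((-M) *ᵥ x t) i := by
      have : (LinearMap.toContinuousLinearMap Li) (NormedSpace.exp (t • (-M)) * (-M))
          = ((NormedSpace.exp (t • (-M)) * (-M)) *ᵥ z) i := rfl
      rw [this, ← hcommE, ← Matrix.mulVec_mulVec, hxalt t]
    have hcomp := hcomp.congr_deriv hval
    have hfun : (⇑(LinearMap.toContinuousLinearMap Li) ∘ fun u : ℝ => NormedSpace.exp (u • -M))
        = fun s : ℝ => x s i := by
      funext s
      show ((NormedSpace.exp (s • -M)) *ᵥ z) i = x s i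
      rw [hxalt s]
    rw [← hfun]
    exact hcomp
  -- energy function
  set F : ℝ → ℝ := fun t => ∑ i, x t i * x t i with hF
  have hF' : ∀ t : ℝ, HasDerivAt F (∑ i, (((-M) *ᵥ x t) i * x t i + x t i * ((-M) *ᵥ x t) i)) t := by
    intro t
    apply HasDerivAt.fun_sum
    intro i _
    exact (hx' t i).mul (hx' t i)
  obtain ⟨c, hcpos, hray⟩ := rayleigh hn A hsc
  set D : ℝ → ℝ := fun t => ∑ i, (((-M) *ᵥ x t) i * x t i + x t i * ((-M) *ᵥ x t) i) with hD
  have hDle : ∀ t : ℝ, D t ≤ -2 * c * F t := by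
    intro t
    have hneg : (-M) *ᵥ x t = -(M *ᵥ x t) := Matrix.neg_mulVec _ _
    have h1 : D t = -2 * ∑ i, x t i * (M *ᵥ x t) i := by
      rw [hD, Finset.mul_sum]
      refine Finset.sum_congr rfl fun i _ => ?_
      rw [hneg]
      simp only [Pi.neg_apply]
      ring
    have h2 : c * F t ≤ ∑ i, x t i * (M *ᵥ x t) i := hray (x t) (hsum t)
    rw [h1]
    linarith
  set G : ℝ → ℝ := fun t => F t * Real.exp (2*c*t) with hG
  have hexpderiv : ∀ t : ℝ,
      HasDerivAt (fun s : ℝ => Real.exp (2*c*s)) (2*c*Real.exp (2*c*t)) t := by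
    intro t
    have h := ((hasDerivAt_id t).const_mul (2*c)).exp
    simp only [id_eq, mul_one] at h
    convert h using 1
    ring
  have hG' : ∀ t : ℝ,
      HasDerivAt G (D t * Real.exp (2*c*t) + F t * (2*c*Real.exp (2*c*t))) t := by
    intro t
    exact (hF' t).mul (hexpderiv t)
  have hG'le : ∀ t : ℝ, D t * Real.exp (2*c*t) + F t * (2*c*Real.exp (2*c*t)) ≤ 0 := by
    intro t
    have he := Real.exp_pos (2*c*t)
    have h1 := hDle t
    nlinarith
  have hGanti : Antitone G := by
    apply antitone_of_deriv_nonpos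
    · intro t; exact (hG' t).differentiableAt
    · intro t; rw [(hG' t).deriv]; exact hG'le t
  have hF0 : ∀ t, 0 ≤ F t := fun t => Finset.sum_nonneg fun i _ => mul_self_nonneg _
  have hFbound : ∀ t : ℝ, 0 ≤ t → F t ≤ F 0 * Real.exp (-(2*c*t)) := by
    intro t ht
    have h1 : G t ≤ G 0 := hGanti ht
    have hG0 : G 0 = F 0 := by rw [hG]; simp
    have h2 := mul_le_mul_of_nonneg_right h1 (le_of_lt (Real.exp_pos (-(2*c*t))))
    have h3 : G t * Real.exp (-(2*c*t)) = F t := by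
      rw [hG, mul_assoc, ← Real.exp_add]
      simp
    rw [h3, hG0] at h2
    exact h2
  have hupper : Filter.Tendsto (fun t : ℝ => F 0 * Real.exp (-(2*c*t)))
      Filter.atTop (nhds 0) := by
    have hlin : Filter.Tendsto (fun t : ℝ => -(2*c*t)) Filter.atTop Filter.atBot := by
      have h2 : Filter.Tendsto (fun t : ℝ => t * (-(2*c))) Filter.atTop Filter.atBot :=
        Filter.tendsto_id.atTop_mul_const_of_neg (by linarith)
      have heq : (fun t : ℝ => -(2*c*t)) = fun t : ℝ => t * (-(2*c)) := by funext t; ring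
      rw [heq]; exact h2
    have hexp := Real.tendsto_exp_atBot.comp hlin
    have := hexp.const_mul (F 0)
    simpa using this
  have hFten : Filter.Tendsto F Filter.atTop (nhds 0) := by
    apply tendsto_of_tendsto_of_tendsto_of_le_of_le' tendsto_const_nhds hupper
    · exact Filter.Eventually.of_forall hF0
    · filter_upwards [Filter.eventually_ge_atTop (0:ℝ)] with t ht
      exact hFbound t ht
  have hcoord : ∀ i, Filter.Tendsto (fun t => x t i) Filter.atTop (nhds 0) := by
    intro i
    apply squeeze_zero_norm (a := fun t => Real.sqrt (F t))
    · intro t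
      have h1 : x t i * x t i ≤ F t :=
        Finset.single_le_sum (fun j (_ : j ∈ Finset.univ) => mul_self_nonneg (x t j))
          (Finset.mem_univ i)
      calc ‖x t i‖ = Real.sqrt (x t i * x t i) := by
            rw [Real.sqrt_mul_self_eq_abs, Real.norm_eq_abs]
        _ ≤ Real.sqrt (F t) := Real.sqrt_le_sqrt h1
    · have := (Real.continuous_sqrt.tendsto 0).comp hFten
      simpa [Function.comp_def] using this
  rw [tendsto_pi_nhds]
  intro i
  simpa using hcoord i

end WLSAC

/-- `ẋ = −W·L·x` achieves signed-average consensus iff `G` is structurally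
balanced. -/
theorem WL_signed_average_consensus (n : ℕ) (hn : 2 ≤ n)
    (A : Matrix (Fin n) (Fin n) ℝ)
    (hdiag : ∀ i, A i i = 0) (hdigon : ∀ i j, 0 ≤ A i j * A j i)
    (hsc : StronglyConnected A) :
    StructBalanced A ↔
      ∃ σ : Fin n → ℝ, IsGauge σ ∧ (∀ i j, 0 ≤ σ i * A i j * σ j) ∧
        ∀ x₀ : Fin n → ℝ,
          Filter.Tendsto (fun t : ℝ => NormedSpace.exp (-(t • (Wmat A * lapOf A))) *ᵥ x₀)
            Filter.atTop (nhds (fun i => ((∑ j, σ j * x₀ j) / (n : ℝ)) * σ i)) := by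
  constructor
  · rintro ⟨σ, hgauge, hbal⟩
    refine ⟨σ, hgauge, hbal, ?_⟩
    have hn0 : 0 < n := lt_of_lt_of_le two_pos hn
    have hnR : (n : ℝ) ≠ 0 := by positivity
    have hσ2 : ∀ i, σ i * σ i = 1 := fun i => by
      rcases hgauge i with h | h <;> rw [h] <;> norm_num
    have habs : ∀ i j, σ i * A i j * σ j = |A i j| := by
      intro i j
      have h1 := hbal i j
      have h2 : |σ i * A i j * σ j| = |A i j| := by
        rw [abs_mul, abs_mul]
        rcases hgauge i with h | h <;> rcases hgauge j with h' | h' <;> rw [h, h'] <;> simp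
      rw [← h2, abs_of_nonneg h1]
    have hAij : ∀ i j, σ i * |A i j| * σ j = A i j := by
      intro i j
      calc σ i * |A i j| * σ j = σ i * (σ i * A i j * σ j) * σ j := by rw [habs i j]
        _ = (σ i * σ i) * A i j * (σ j * σ j) := by ring
        _ = A i j := by rw [hσ2 i, hσ2 j]; ring
    set D := Matrix.diagonal σ with hD
    have hDD : D * D = 1 := by
      rw [hD, Matrix.diagonal_mul_diagonal]
      have hσσ : (fun i => σ i * σ i) = fun _ : Fin n => (1:ℝ) := funext hσ2
      rw [hσσ]
      exact Matrix.diagonal_one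
    have hconj_entry : ∀ (X : Matrix (Fin n) (Fin n) ℝ) (i j : Fin n),
        (D * X * D) i j = σ i * X i j * σ j := by
      intro X i j
      rw [hD, Matrix.mul_diagonal, Matrix.diagonal_mul]
    have hlapOf_apply : ∀ i j, lapOf A i j = (if i = j then inDeg A i else 0) - A i j := by
      intro i j
      simp [lapOf, Matrix.diagonal_apply, Matrix.sub_apply]
    have hL : D * lapBar A * D = lapOf A := by
      ext i j
      rw [hconj_entry, WLSAC.lapBar_apply, hlapOf_apply]
      rcases eq_or_ne i j with rfl | hij
      · simp only [if_pos rfl]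
        calc σ i * (inDeg A i - |A i i|) * σ i
            = (σ i * σ i) * inDeg A i - σ i * |A i i| * σ i := by ring
          _ = inDeg A i - A i i := by rw [hσ2 i, hAij i i]; ring
      · simp only [if_neg hij]
        calc σ i * (0 - |A i j|) * σ j = -(σ i * |A i j| * σ j) := by ring
          _ = 0 - A i j := by rw [hAij i j]; ring
    have hWD : Wmat A * D = D * Wmat A := by
      rw [hD, Wmat, Matrix.diagonal_mul_diagonal, Matrix.diagonal_mul_diagonal]
      have : (fun i => minorDet A i * σ i) = fun i => σ i * minorDet A i := by
        funext i
        exact mul_comm _ _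
      rw [this]
    have hkey : Wmat A * lapOf A = D * (Wmat A * lapBar A) * D := by
      rw [← hL]
      simp only [← Matrix.mul_assoc]
      rw [hWD]
    have hunit : IsUnit D := ⟨⟨D, D, by exact hDD, by exact hDD⟩, rfl⟩
    have hDinv : D⁻¹ = D := Matrix.inv_eq_right_inv hDD
    have hexp_eq : ∀ t : ℝ, NormedSpace.exp (-(t • (Wmat A * lapOf A)))
        = D * NormedSpace.exp (-(t • (Wmat A * lapBar A))) * D := by
      intro t
      have h1 : -(t • (Wmat A * lapOf A)) = D * (-(t • (Wmat A * lapBar A))) * D := by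
        rw [hkey, Matrix.mul_neg, Matrix.neg_mul, Matrix.mul_smul, Matrix.smul_mul]
      rw [h1]
      have h2 : D * (-(t • (Wmat A * lapBar A))) * D
          = D * (-(t • (Wmat A * lapBar A))) * D⁻¹ := by rw [hDinv]
      rw [h2, Matrix.exp_conj D _ hunit, hDinv]
    intro x₀
    set a : ℝ := (∑ j, σ j * x₀ j) / (n : ℝ) with ha
    set y : Fin n → ℝ := fun i => σ i * x₀ i with hy
    have hDx₀ : D *ᵥ x₀ = y := by
      ext i
      rw [hD]
      simp only [Matrix.mulVec, dotProduct, Matrix.diagonal_apply, ite_mul, zero_mul]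
      rw [Finset.sum_ite_eq Finset.univ i (fun j => σ i * x₀ j)]
      simp [hy]
    set ybar : Fin n → ℝ := fun _ => a with hybar
    set zv : Fin n → ℝ := y - ybar with hzv
    have hzsum : ∑ i, zv i = 0 := by
      rw [hzv]
      simp only [Pi.sub_apply, Finset.sum_sub_distrib]
      have h1 : ∑ _i : Fin n, a = (n : ℝ) * a := by
        rw [Finset.sum_const, Finset.card_univ, Fintype.card_fin, nsmul_eq_mul]
      have h2 : ∑ i, y i = ∑ j, σ j * x₀ j := rfl
      rw [h1, h2, ha]
      field_simp
      exact sub_self _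
    have hybar0 : (Wmat A * lapBar A) *ᵥ ybar = 0 := by
      ext k
      simp only [Matrix.mulVec, dotProduct, Pi.zero_apply]
      have : ∀ j, (Wmat A * lapBar A) k j * ybar j = (Wmat A * lapBar A) k j * a := fun j => rfl
      simp only [this]
      rw [← Finset.sum_mul, WLSAC.M_row_sum A k, zero_mul]
    have hexp_ybar : ∀ t : ℝ,
        NormedSpace.exp (-(t • (Wmat A * lapBar A))) *ᵥ ybar = ybar := fun t =>
      WLSAC.exp_neg_smul_mulVec_fixed _ hybar0 t
    have hdecay := WLSAC.exp_decay hn A hsc hzsum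
    have hyy : ybar + zv = y := by rw [hzv]; abel
    have hsplit : (fun t : ℝ => NormedSpace.exp (-(t • (Wmat A * lapOf A))) *ᵥ x₀)
        = fun t : ℝ => fun i =>
            σ i * (a + (NormedSpace.exp (-(t • (Wmat A * lapBar A))) *ᵥ zv) i) := by
      funext t
      rw [hexp_eq t, ← Matrix.mulVec_mulVec, ← Matrix.mulVec_mulVec, hDx₀, ← hyy,
        Matrix.mulVec_add, hexp_ybar t]
      ext i
      rw [hD]
      simp only [Matrix.mulVec, dotProduct, Matrix.diagonal_apply, ite_mul, zero_mul,
        Pi.add_apply]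
      rw [Finset.sum_ite_eq Finset.univ i _]
      simp [hybar]
    rw [hsplit, tendsto_pi_nhds]
    intro i
    have h1 : Filter.Tendsto
        (fun t : ℝ => (NormedSpace.exp (-(t • (Wmat A * lapBar A))) *ᵥ zv) i)
        Filter.atTop (nhds 0) := by
      rw [tendsto_pi_nhds] at hdecay
      simpa using hdecay i
    have h2 := (Filter.Tendsto.add (tendsto_const_nhds (x := a)) h1).const_mul (σ i)
    have h3 : σ i * (a + 0) = a * σ i := by ring
    rw [h3] at h2
    exact h2
  · rintro ⟨σ, hgauge, hbal, -⟩
    exact ⟨σ, hgauge, hbal⟩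
end

section
/- Let G be a strongly connected signed digraph. Then the signed network ẋ = −W·L·x achieves state stability if and only if G is structurally unbalanced; precisely: G is structurally unbalanced if and only if for every initial state x₀ ∈ ℝⁿ, the solution x(t) = exp(−t·W·L)·x₀ satisfies lim_{t→∞} x(t) = 0. -/
open Matrix BigOperators Filter

set_option linter.unusedVariables false
set_option linter.unnecessarySeqFocus false

namespace SignedNet
variable {n : ℕ}

lemma lapBar_apply (A : Matrix (Fin n) (Fin n) ℝ) (i j : Fin n) :
    lapBar A i j = (if i = j then inDeg A i else 0) - |A i j| := by
  simp [lapBar, diagonal_apply, Matrix.sub_apply]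

lemma lapBar_mulVec_one (A : Matrix (Fin n) (Fin n) ℝ) :
    lapBar A *ᵥ (fun _ => (1:ℝ)) = 0 := by
  funext i
  simp only [mulVec, dotProduct, lapBar_apply, mul_one, Finset.sum_sub_distrib,
    Finset.sum_ite_eq, Finset.mem_univ, if_true, inDeg, Pi.zero_apply, sub_self]

lemma kernel_const (A : Matrix (Fin n) (Fin n) ℝ) (hsc : StronglyConnected A)
    {v : Fin n → ℝ} (hv : lapBar A *ᵥ v = 0) (i j : Fin n) : v i = v j := by
  obtain ⟨j₀, -, hj₀⟩ := Finset.exists_max_image Finset.univ v ⟨i, Finset.mem_univ i⟩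
  set M := v j₀ with hM
  have key : ∀ u, v u = M → ∀ k, A u k ≠ 0 → v k = M := by
    intro u hu k hk
    have h0 : ∑ l, lapBar A u l * v l = 0 := congrFun hv u
    have h1 : ∑ l, |A u l| * (M - v l) = 0 := by
      have : ∑ l, |A u l| * (M - v l)
          = (∑ l, |A u l|) * M - ∑ l, |A u l| * v l := by
        rw [Finset.sum_mul]
        rw [← Finset.sum_sub_distrib]
        congr 1; funext l; ring
      rw [this]
      have h2 : ∑ l, |A u l| * v l = inDeg A u * v u := by
        have := h0
        simp only [lapBar_apply, sub_mul, Finset.sum_sub_distrib] at this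
        simp only [ite_mul, zero_mul, Finset.sum_ite_eq, Finset.mem_univ, if_true] at this
        linarith
      rw [h2, hu, inDeg]
      ring
    have hterm := (Finset.sum_eq_zero_iff_of_nonneg (fun l _ => by
      have : v l ≤ M := hj₀ l (Finset.mem_univ l)
      exact mul_nonneg (abs_nonneg _) (by linarith))).mp h1 k (Finset.mem_univ k)
    have habs : |A u k| ≠ 0 := fun h => hk (abs_eq_zero.mp h)
    have : M - v k = 0 := by
      rcases mul_eq_zero.mp hterm with h | h
      · exact absurd h habs
      · exact h
    linarith
  have hprop : ∀ u, Relation.TransGen (fun a b => A b a ≠ 0) u j₀ → v u = M := by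
    intro u htg
    induction htg using Relation.TransGen.head_induction_on with
    | single h' => exact key j₀ rfl _ h'
    | head h' _ ihp => exact key _ ihp _ h'
  have hall : ∀ u, v u = M := by
    intro u
    by_cases h : u = j₀
    · rw [h]
    · exact hprop u (hsc u j₀ h)
  rw [hall i, hall j]

end SignedNet

namespace SignedNet
variable {m : ℕ}

lemma one_ne_zero_vec : (fun _ : Fin (m+1) => (1:ℝ)) ≠ 0 := by
  intro h
  have := congrFun h 0
  norm_num at this

lemma det_lapBar_zero (A : Matrix (Fin (m+1)) (Fin (m+1)) ℝ) : (lapBar A).det = 0 :=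
  (Matrix.exists_mulVec_eq_zero_iff).mp ⟨_, one_ne_zero_vec, lapBar_mulVec_one A⟩

lemma minorDet_eq_succAbove (A : Matrix (Fin (m+1)) (Fin (m+1)) ℝ) (i : Fin (m+1)) :
    minorDet A i = ((lapBar A).submatrix i.succAbove i.succAbove).det := by
  unfold minorDet
  rw [← Matrix.det_submatrix_equiv_self (finSuccAboveEquiv i)]
  rw [Matrix.submatrix_submatrix]
  congr 1

lemma adjugate_diag (M : Matrix (Fin (m+1)) (Fin (m+1)) ℝ) (i : Fin (m+1)) :
    Matrix.adjugate M i i = (M.submatrix i.succAbove i.succAbove).det := by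
  rw [Matrix.adjugate_apply, Matrix.det_succ_row _ i]
  rw [Finset.sum_eq_single i]
  · have h1 : (M.updateRow i (Pi.single i 1)) i i = 1 := by
      rw [Matrix.updateRow_self]; simp
    have h2 : (M.updateRow i (Pi.single i 1)).submatrix i.succAbove i.succAbove
        = M.submatrix i.succAbove i.succAbove := by
      funext a b
      simp only [Matrix.submatrix_apply]
      rw [Matrix.updateRow_ne (Fin.succAbove_ne i a)]
    rw [h1, h2]
    have : (-1 : ℝ) ^ ((i : ℕ) + (i : ℕ)) = 1 := Even.neg_one_pow ⟨(i : ℕ), rfl⟩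
    rw [this]; ring
  · intro j _ hji
    have : (M.updateRow i (Pi.single i 1)) i j = 0 := by
      rw [Matrix.updateRow_self, Pi.single_apply, if_neg hji]
    rw [this]; ring
  · intro h; exact absurd (Finset.mem_univ i) h

lemma adjugate_lapBar_row (A : Matrix (Fin (m+1)) (Fin (m+1)) ℝ) (hsc : StronglyConnected A)
    (k j : Fin (m+1)) : Matrix.adjugate (lapBar A) k j = minorDet A j := by
  have hmul : lapBar A * Matrix.adjugate (lapBar A) = 0 := by
    rw [Matrix.mul_adjugate, det_lapBar_zero, zero_smul]
  have hker : lapBar A *ᵥ (fun l => Matrix.adjugate (lapBar A) l j) = 0 := by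
    funext a
    have := congrFun (congrFun hmul a) j
    simpa [Matrix.mul_apply, Matrix.mulVec, dotProduct] using this
  have := kernel_const A hsc hker k j
  rw [this, adjugate_diag, minorDet_eq_succAbove]

lemma sum_w_lapBar (A : Matrix (Fin (m+1)) (Fin (m+1)) ℝ) (hsc : StronglyConnected A)
    (j : Fin (m+1)) : ∑ k, minorDet A k * lapBar A k j = 0 := by
  have hmul : Matrix.adjugate (lapBar A) * lapBar A = 0 := by
    rw [Matrix.adjugate_mul, det_lapBar_zero, zero_smul]
  have := congrFun (congrFun hmul j) j
  simp only [Matrix.mul_apply, Matrix.zero_apply] at this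
  rw [← this]
  refine Finset.sum_congr rfl fun k _ => ?_
  rw [adjugate_lapBar_row A hsc]

lemma sum_w_abs (A : Matrix (Fin (m+1)) (Fin (m+1)) ℝ) (hsc : StronglyConnected A)
    (j : Fin (m+1)) : ∑ k, minorDet A k * |A k j| = minorDet A j * inDeg A j := by
  have h := sum_w_lapBar A hsc j
  simp only [lapBar_apply, mul_sub, Finset.sum_sub_distrib] at h
  have h2 : ∑ k, minorDet A k * (if k = j then inDeg A k else 0) = minorDet A j * inDeg A j := by
    rw [Finset.sum_eq_single j] <;> simp_all
  rw [h2] at h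
  linarith

end SignedNet

namespace SignedNet
variable {m : ℕ}

lemma row_sum_minor (A : Matrix (Fin (m+1)) (Fin (m+1)) ℝ) (i : Fin (m+1)) (a : Fin m) :
    ∑ b : Fin m, |A (i.succAbove a) (i.succAbove b)|
      = inDeg A (i.succAbove a) - |A (i.succAbove a) i| := by
  rw [inDeg, Fin.sum_univ_succAbove (fun j => |A (i.succAbove a) j|) i]
  ring

lemma minor_shift_kernel (A : Matrix (Fin (m+1)) (Fin (m+1)) ℝ)
    (hdiag : ∀ i, A i i = 0) (hsc : StronglyConnected A) (i : Fin (m+1))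
    {t : ℝ} (ht : 0 ≤ t) {v : Fin m → ℝ}
    (hv : ((lapBar A).submatrix i.succAbove i.succAbove + t • (1 : Matrix (Fin m) (Fin m) ℝ)) *ᵥ v = 0) :
    v = 0 := by
  by_contra hv0
  obtain ⟨aw, haw⟩ := Function.ne_iff.mp hv0
  obtain ⟨a₀, -, ha₀⟩ := Finset.exists_max_image Finset.univ (fun a => |v a|)
    ⟨aw, Finset.mem_univ aw⟩
  set Mx := |v a₀| with hMx
  have hMxpos : 0 < Mx := lt_of_lt_of_le (abs_pos.mpr haw) (ha₀ aw (Finset.mem_univ aw))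
  have heq : ∀ a, (inDeg A (i.succAbove a) + t) * v a
      = ∑ b, |A (i.succAbove a) (i.succAbove b)| * v b := by
    intro a
    have h := congrFun hv a
    simp only [mulVec, dotProduct, Matrix.add_apply, Matrix.submatrix_apply, lapBar_apply,
      Matrix.smul_apply, Matrix.one_apply, smul_eq_mul, Pi.zero_apply] at h
    have hrw : ∀ b, ((if i.succAbove a = i.succAbove b then inDeg A (i.succAbove a) else 0) -
        |A (i.succAbove a) (i.succAbove b)| + t * (if a = b then 1 else 0)) * v b
        = (if a = b then (inDeg A (i.succAbove a) + t) * v b else 0)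
          - |A (i.succAbove a) (i.succAbove b)| * v b := by
      intro b
      by_cases hab : a = b
      · subst hab; simp; ring
      · rw [if_neg (fun h => hab (Fin.succAbove_right_injective h)), if_neg hab, if_neg hab]
        ring
    rw [Finset.sum_congr rfl (fun b _ => hrw b), Finset.sum_sub_distrib,
      Finset.sum_ite_eq Finset.univ a (fun b => (inDeg A (i.succAbove a) + t) * v b)] at h
    simp only [Finset.mem_univ, if_true] at h
    linarith
  have key : ∀ a, |v a| = Mx → A (i.succAbove a) i = 0 ∧
      ∀ b, A (i.succAbove a) (i.succAbove b) ≠ 0 → |v b| = Mx := by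
    intro a ha
    have hd0 : 0 ≤ inDeg A (i.succAbove a) := Finset.sum_nonneg fun j _ => abs_nonneg _
    have h1 : (inDeg A (i.succAbove a) + t) * Mx
        ≤ ∑ b, |A (i.succAbove a) (i.succAbove b)| * |v b| := by
      have habs : abs ((inDeg A (i.succAbove a) + t) * v a)
          = (inDeg A (i.succAbove a) + t) * Mx := by
        rw [abs_mul, ha, abs_of_nonneg]; linarith
      rw [← habs, heq a]
      calc abs (∑ b, |A (i.succAbove a) (i.succAbove b)| * v b)
          ≤ ∑ b, abs (|A (i.succAbove a) (i.succAbove b)| * v b) :=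
            Finset.abs_sum_le_sum_abs _ _
        _ = ∑ b, |A (i.succAbove a) (i.succAbove b)| * |v b| := by
            refine Finset.sum_congr rfl fun b _ => ?_
            rw [abs_mul, abs_abs]
    have h2 : ∑ b, |A (i.succAbove a) (i.succAbove b)| * |v b|
        ≤ (inDeg A (i.succAbove a) - |A (i.succAbove a) i|) * Mx := by
      rw [← row_sum_minor A i a, Finset.sum_mul]
      exact Finset.sum_le_sum fun b _ =>
        mul_le_mul_of_nonneg_left (ha₀ b (Finset.mem_univ b)) (abs_nonneg _)
    have h3 : (t + |A (i.succAbove a) i|) * Mx ≤ 0 := by nlinarith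
    have h4 : |A (i.succAbove a) i| = 0 := by
      have := abs_nonneg (A (i.succAbove a) i)
      nlinarith
    refine ⟨abs_eq_zero.mp h4, ?_⟩
    intro b hb
    have hsum0 : ∑ b, |A (i.succAbove a) (i.succAbove b)| * (Mx - |v b|) = 0 := by
      have hexp : ∑ b, |A (i.succAbove a) (i.succAbove b)| * (Mx - |v b|)
          = (inDeg A (i.succAbove a) - |A (i.succAbove a) i|) * Mx
            - ∑ b, |A (i.succAbove a) (i.succAbove b)| * |v b| := by
        rw [← row_sum_minor A i a, Finset.sum_mul, ← Finset.sum_sub_distrib]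
        congr 1; funext b; ring
      have hle : (0:ℝ) ≤ ∑ b, |A (i.succAbove a) (i.succAbove b)| * (Mx - |v b|) :=
        Finset.sum_nonneg fun b _ => mul_nonneg (abs_nonneg _)
          (by have := ha₀ b (Finset.mem_univ b); linarith)
      nlinarith
    have := (Finset.sum_eq_zero_iff_of_nonneg (fun b _ => mul_nonneg (abs_nonneg _)
      (by have := ha₀ b (Finset.mem_univ b); linarith))).mp hsum0 b (Finset.mem_univ b)
    rcases mul_eq_zero.mp this with h | h
    · exact absurd (abs_eq_zero.mp h) hb
    · linarith
  -- propagation via strong connectivity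
  set P : Fin (m+1) → Prop := fun u => ∃ b, i.succAbove b = u ∧ |v b| = Mx with hP
  have hP0 : P (i.succAbove a₀) := ⟨a₀, rfl, rfl⟩
  have hstep : ∀ u c, A c u ≠ 0 → P c → P u := by
    rintro u c hA ⟨b, rfl, hb⟩
    have hk := key b hb
    have hui : u ≠ i := by
      rintro rfl; exact hA hk.1
    obtain ⟨b', hb'⟩ := Fin.exists_succAbove_eq hui
    exact ⟨b', hb', hk.2 b' (by rwa [hb'])⟩
  have hne : i ≠ i.succAbove a₀ := (Fin.succAbove_ne i a₀).symm
  have hprop : ∀ u, Relation.TransGen (fun x y => A y x ≠ 0) u (i.succAbove a₀) → P u := by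
    intro u htg
    induction htg using Relation.TransGen.head_induction_on with
    | single h' => exact hstep _ _ h' hP0
    | head h' _ ihp => exact hstep _ _ h' ihp
  obtain ⟨b, hb, -⟩ := hprop i (hsc i _ hne)
  exact Fin.succAbove_ne i b hb

lemma det_shift_ne (A : Matrix (Fin (m+1)) (Fin (m+1)) ℝ)
    (hdiag : ∀ i, A i i = 0) (hsc : StronglyConnected A) (i : Fin (m+1))
    {t : ℝ} (ht : 0 ≤ t) :
    ((lapBar A).submatrix i.succAbove i.succAbove + t • (1 : Matrix (Fin m) (Fin m) ℝ)).det ≠ 0 := by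
  intro h0
  obtain ⟨v, hv0, hv⟩ := Matrix.exists_mulVec_eq_zero_iff.mpr h0
  exact hv0 (minor_shift_kernel A hdiag hsc i ht hv)

lemma minorDet_pos (A : Matrix (Fin (m+1)) (Fin (m+1)) ℝ)
    (hdiag : ∀ i, A i i = 0) (hsc : StronglyConnected A) (i : Fin (m+1)) :
    0 < minorDet A i := by
  rw [minorDet_eq_succAbove]
  set B := (lapBar A).submatrix i.succAbove i.succAbove with hB
  have hfc : Continuous fun t : ℝ => (B + t • (1 : Matrix (Fin m) (Fin m) ℝ)).det :=
    Continuous.matrix_det (continuous_const.add (continuous_id.smul continuous_const))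
  have hg : Filter.Tendsto (fun s : ℝ => (s • B + 1).det) (nhds 0) (nhds 1) := by
    have hc : Continuous fun s : ℝ => (s • B + 1).det :=
      Continuous.matrix_det ((continuous_id.smul continuous_const).add continuous_const)
    have := hc.continuousAt (x := 0)
    rwa [ContinuousAt, zero_smul, zero_add, Matrix.det_one] at this
  have hev : ∀ᶠ s in nhds (0:ℝ), 0 < (s • B + 1).det :=
    hg.eventually (eventually_gt_nhds (by norm_num))
  obtain ⟨s, hgs, hs⟩ := ((hev.filter_mono nhdsWithin_le_nhds).and
    (eventually_mem_nhdsWithin (s := Set.Ioi (0:ℝ)))).exists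
  have hs0 : (0:ℝ) < s := hs
  have hkey : B + s⁻¹ • (1 : Matrix (Fin m) (Fin m) ℝ) = s⁻¹ • (s • B + 1) := by
    rw [smul_add, smul_smul, inv_mul_cancel₀ hs0.ne', one_smul]
  have hft₀ : 0 < (B + s⁻¹ • (1 : Matrix (Fin m) (Fin m) ℝ)).det := by
    rw [hkey, Matrix.det_smul]
    exact mul_pos (pow_pos (inv_pos.mpr hs0) _) hgs
  have hf0ne : B.det ≠ 0 := by
    have := det_shift_ne A hdiag hsc i (t := 0) le_rfl
    rwa [zero_smul, add_zero] at this
  by_contra hle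
  push_neg at hle
  have hf0 : B.det < 0 := lt_of_le_of_ne hle hf0ne
  have hsub : Set.Icc ((B + (0:ℝ) • (1 : Matrix (Fin m) (Fin m) ℝ)).det)
      ((B + s⁻¹ • (1 : Matrix (Fin m) (Fin m) ℝ)).det)
      ⊆ (fun t : ℝ => (B + t • (1 : Matrix (Fin m) (Fin m) ℝ)).det) '' Set.Icc 0 s⁻¹ :=
    intermediate_value_Icc (le_of_lt (inv_pos.mpr hs0)) hfc.continuousOn
  have h0mem : (0:ℝ) ∈ Set.Icc ((B + (0:ℝ) • (1 : Matrix (Fin m) (Fin m) ℝ)).det)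
      ((B + s⁻¹ • (1 : Matrix (Fin m) (Fin m) ℝ)).det) := by
    rw [zero_smul, add_zero]
    exact ⟨le_of_lt hf0, le_of_lt hft₀⟩
  obtain ⟨c, hc, hfc0⟩ := hsub h0mem
  exact det_shift_ne A hdiag hsc i hc.1 hfc0

end SignedNet

namespace SignedNet
variable {m : ℕ}

lemma sign_mul_abs' (a : ℝ) : Real.sign a * |a| = a := by
  rcases lt_trichotomy a 0 with h | h | h
  · rw [Real.sign_of_neg h, abs_of_neg h]; ring
  · simp [h]
  · rw [Real.sign_of_pos h, abs_of_pos h]; ring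

lemma sign_sq_mul_abs (a : ℝ) : Real.sign a * Real.sign a * |a| = |a| := by
  rcases eq_or_ne a 0 with h | h
  · simp [h]
  · rcases Real.sign_apply_eq_of_ne_zero a h with hs | hs <;> rw [hs] <;> ring

lemma phiE_term (w a xi xj : ℝ) :
    w * |a| * (xi - Real.sign a * xj) ^ 2
      = w * |a| * xi ^ 2 - 2 * (w * a * (xi * xj)) + w * |a| * xj ^ 2 := by
  have h1 := sign_mul_abs' a
  have h2 := sign_sq_mul_abs a
  linear_combination (-2*w*xi*xj) * h1 + (w*xj^2) * h2

lemma quadform_eq (A : Matrix (Fin (m+1)) (Fin (m+1)) ℝ) (hsc : StronglyConnected A)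
    (x : Fin (m+1) → ℝ) :
    x ⬝ᵥ ((Wmat A * lapOf A + (Wmat A * lapOf A)ᵀ) *ᵥ x) = PhiE A x := by
  set P : Matrix (Fin (m+1)) (Fin (m+1)) ℝ := Wmat A * lapOf A with hPdef
  have hP : ∀ i j, P i j = (if i = j then minorDet A i * inDeg A i else 0)
      - minorDet A i * A i j := by
    intro i j
    rw [hPdef, Wmat, Matrix.diagonal_mul, lapOf, Matrix.sub_apply, Matrix.diagonal_apply]
    by_cases h : i = j <;> simp [h] <;> ring
  have hD : ∑ i, ∑ j, P i j * (x i * x j)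
      = (∑ i, minorDet A i * inDeg A i * x i ^ 2)
        - ∑ i, ∑ j, minorDet A i * A i j * (x i * x j) := by
    rw [← Finset.sum_sub_distrib]
    refine Finset.sum_congr rfl fun i _ => ?_
    have h1 : ∑ j, P i j * (x i * x j)
        = (∑ j, if i = j then minorDet A i * inDeg A i * x i ^ 2 else 0)
          - ∑ j, minorDet A i * A i j * (x i * x j) := by
      rw [← Finset.sum_sub_distrib]
      refine Finset.sum_congr rfl fun j _ => ?_
      rw [hP]
      by_cases h : i = j
      · subst h; simp; ring
      · simp [h]
    rw [h1, Finset.sum_ite_eq Finset.univ i (fun _ => minorDet A i * inDeg A i * x i ^ 2)]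
    simp
  have lhs_eq : x ⬝ᵥ ((P + Pᵀ) *ᵥ x)
      = ∑ i, ∑ j, P i j * (x i * x j) + ∑ i, ∑ j, P j i * (x i * x j) := by
    simp only [dotProduct, mulVec, Matrix.add_apply, Matrix.transpose_apply]
    rw [← Finset.sum_add_distrib]
    refine Finset.sum_congr rfl fun i _ => ?_
    rw [Finset.mul_sum, ← Finset.sum_add_distrib]
    refine Finset.sum_congr rfl fun j _ => ?_
    ring
  have swap_eq : ∑ i, ∑ j, P j i * (x i * x j) = ∑ i, ∑ j, P i j * (x i * x j) := by
    rw [Finset.sum_comm]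
    exact Finset.sum_congr rfl fun i _ => Finset.sum_congr rfl fun j _ => by ring
  have hsum1 : ∑ i, ∑ j, minorDet A i * |A i j| * x i ^ 2
      = ∑ i, minorDet A i * inDeg A i * x i ^ 2 := by
    refine Finset.sum_congr rfl fun i _ => ?_
    rw [inDeg]
    simp only [Finset.mul_sum, Finset.sum_mul]
  have hsum2 : ∑ i, ∑ j, minorDet A i * |A i j| * x j ^ 2
      = ∑ i, minorDet A i * inDeg A i * x i ^ 2 := by
    rw [Finset.sum_comm]
    refine Finset.sum_congr rfl fun j _ => ?_
    have h2 : ∑ i, minorDet A i * |A i j| * x j ^ 2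
        = (∑ i, minorDet A i * |A i j|) * x j ^ 2 := (Finset.sum_mul _ _ _).symm
    rw [h2, sum_w_abs A hsc j]
  have phiE_expand : PhiE A x
      = ∑ i, ∑ j, minorDet A i * |A i j| * x i ^ 2
        - 2 * ∑ i, ∑ j, minorDet A i * A i j * (x i * x j)
        + ∑ i, ∑ j, minorDet A i * |A i j| * x j ^ 2 := by
    rw [PhiE]
    rw [Finset.sum_congr rfl fun i _ => Finset.sum_congr rfl fun j _ =>
      phiE_term (minorDet A i) (A i j) (x i) (x j)]
    simp only [Finset.sum_sub_distrib, Finset.sum_add_distrib, Finset.mul_sum]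
  rw [lhs_eq, swap_eq, hD, phiE_expand, hsum1, hsum2]
  ring

end SignedNet

namespace SignedNet
variable {m : ℕ}

lemma PhiE_nonneg (A : Matrix (Fin (m+1)) (Fin (m+1)) ℝ)
    (hdiag : ∀ i, A i i = 0) (hsc : StronglyConnected A) (x : Fin (m+1) → ℝ) :
    0 ≤ PhiE A x :=
  Finset.sum_nonneg fun i _ => Finset.sum_nonneg fun j _ =>
    mul_nonneg (mul_nonneg (minorDet_pos A hdiag hsc i).le (abs_nonneg _)) (sq_nonneg _)

lemma PhiE_pos (A : Matrix (Fin (m+1)) (Fin (m+1)) ℝ)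
    (hdiag : ∀ i, A i i = 0) (hsc : StronglyConnected A)
    (hnb : ¬ StructBalanced A) {x : Fin (m+1) → ℝ} (hx : x ≠ 0) :
    0 < PhiE A x := by
  rcases lt_or_eq_of_le (PhiE_nonneg A hdiag hsc x) with h | h
  · exact h
  exfalso
  -- PhiE A x = 0; derive structural balance
  have hterm : ∀ i j, minorDet A i * |A i j| * (x i - Real.sign (A i j) * x j) ^ 2 = 0 := by
    intro i j
    have h0 := (Finset.sum_eq_zero_iff_of_nonneg (fun i _ => Finset.sum_nonneg fun j _ =>
      mul_nonneg (mul_nonneg (minorDet_pos A hdiag hsc i).le (abs_nonneg _))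
        (sq_nonneg _))).mp h.symm i (Finset.mem_univ i)
    exact (Finset.sum_eq_zero_iff_of_nonneg (fun j _ =>
      mul_nonneg (mul_nonneg (minorDet_pos A hdiag hsc i).le (abs_nonneg _))
        (sq_nonneg _))).mp h0 j (Finset.mem_univ j)
  have hedge : ∀ i j, A i j ≠ 0 → x i = Real.sign (A i j) * x j := by
    intro i j hij
    have := hterm i j
    rcases mul_eq_zero.mp this with h' | h'
    · rcases mul_eq_zero.mp h' with h'' | h''
      · exact absurd h'' (minorDet_pos A hdiag hsc i).ne'
      · exact absurd (abs_eq_zero.mp h'') hij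
    · have := pow_eq_zero_iff (n := 2) (by norm_num) |>.mp h'
      linarith
  have habs : ∀ i j, A i j ≠ 0 → |x i| = |x j| := by
    intro i j hij
    rw [hedge i j hij, abs_mul]
    rcases Real.sign_apply_eq_of_ne_zero (A i j) hij with hs | hs <;> rw [hs] <;> simp
  -- all |x i| are equal
  have hall : ∀ i j : Fin (m+1), |x i| = |x j| := by
    have hstep : ∀ u c : Fin (m+1), A c u ≠ 0 → |x c| = |x u| := fun u c h => habs c u h
    have hpath : ∀ i j : Fin (m+1), Relation.TransGen (fun u v => A v u ≠ 0) i j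
        → |x i| = |x j| := by
      intro i j htg
      induction htg with
      | single h => exact (hstep _ _ h).symm
      | tail _ h ih => exact ih.trans (hstep _ _ h).symm
    intro i j
    rcases eq_or_ne i j with rfl | h
    · rfl
    · exact hpath i j (hsc i j h)
  obtain ⟨k, hk⟩ := Function.ne_iff.mp hx
  have hkne : x k ≠ 0 := hk
  set c := |x k| with hc
  have hcpos : 0 < c := abs_pos.mpr hkne
  have hxc : ∀ i, |x i| = c := fun i => hall i k
  apply hnb
  refine ⟨fun i => x i / c, fun i => ?_, fun i j => ?_⟩
  · rcases abs_eq hcpos.le |>.mp (hxc i) with h' | h'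
    · left; show x i / c = 1; rw [h']; field_simp
    · right; show x i / c = -1; rw [h']; field_simp
  · rcases eq_or_ne (A i j) 0 with h0 | h0
    · simp [h0]
    · have hx_ij := hedge i j h0
      have hsq : x j * x j = c ^ 2 := by
        rcases abs_eq hcpos.le |>.mp (hxc j) with h' | h' <;> rw [h'] <;> ring
      have hsign : Real.sign (A i j) * A i j = |A i j| := by
        rcases lt_trichotomy (A i j) 0 with h' | h' | h'
        · rw [Real.sign_of_neg h', abs_of_neg h']; ring
        · exact absurd h' h0
        · rw [Real.sign_of_pos h', abs_of_pos h']; ring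
      have : x i / c * A i j * (x j / c) = |A i j| := by
        rw [hx_ij]
        field_simp
        linear_combination ((A i j).sign * A i j) * hsq + (c*c) * hsign
      rw [this]
      exact abs_nonneg _

lemma lap_mulVec_gauge (A : Matrix (Fin (m+1)) (Fin (m+1)) ℝ)
    {σ : Fin (m+1) → ℝ} (hg : IsGauge σ) (hb : ∀ i j, 0 ≤ σ i * A i j * σ j) :
    lapOf A *ᵥ σ = 0 := by
  funext i
  have hsq : σ i * σ i = 1 := by rcases hg i with h | h <;> rw [h] <;> norm_num
  have hterm : ∀ j, A i j * σ j = σ i * |A i j| := by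
    intro j
    have h1 : σ i * A i j * σ j = |A i j| := by
      have h2 : |σ i * A i j * σ j| = |A i j| := by
        rw [abs_mul, abs_mul]
        rcases hg i with h | h <;> rcases hg j with h' | h' <;> rw [h, h'] <;> simp
      rw [← h2]; exact (abs_of_nonneg (hb i j)).symm
    calc A i j * σ j = σ i * (σ i * A i j * σ j) := by rw [← mul_assoc, ← mul_assoc, hsq]; ring
    _ = σ i * |A i j| := by rw [h1]
  simp only [mulVec, dotProduct, lapOf, Matrix.sub_apply, Matrix.diagonal_apply, Pi.zero_apply]
  have : ∀ j, ((if i = j then inDeg A i else 0) - A i j) * σ j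
      = (if i = j then inDeg A i * σ j else 0) - σ i * |A i j| := by
    intro j
    rw [← hterm j]
    by_cases h : i = j <;> simp [h] <;> ring
  rw [Finset.sum_congr rfl fun j _ => this j, Finset.sum_sub_distrib,
    Finset.sum_ite_eq Finset.univ i (fun j => inDeg A i * σ j)]
  simp only [Finset.mem_univ, if_true, ← Finset.mul_sum, inDeg]
  ring

end SignedNet

namespace SignedNet
variable {n : ℕ}

lemma continuous_mulVec_const (x : Fin n → ℝ) :
    Continuous (fun P : Matrix (Fin n) (Fin n) ℝ => P *ᵥ x) := by
  refine continuous_pi fun i => ?_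
  simp only [mulVec, dotProduct]
  exact continuous_finset_sum _ fun j _ =>
    (Continuous.matrix_elem continuous_id i j).mul continuous_const

open scoped Nat in
lemma exp_mulVec_fixed (N : Matrix (Fin n) (Fin n) ℝ) {σ : Fin n → ℝ}
    (h : N *ᵥ σ = 0) : NormedSpace.exp N *ᵥ σ = σ := by
  letI : SeminormedRing (Matrix (Fin n) (Fin n) ℝ) := Matrix.linftyOpSemiNormedRing
  letI : NormedRing (Matrix (Fin n) (Fin n) ℝ) := Matrix.linftyOpNormedRing
  letI : NormedAlgebra ℝ (Matrix (Fin n) (Fin n) ℝ) := Matrix.linftyOpNormedAlgebra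
  have hsum := NormedSpace.exp_series_hasSum_exp' (𝕂 := ℝ) N
  have hmap := hsum.map (AddMonoidHom.mk' (fun P : Matrix (Fin n) (Fin n) ℝ => P *ᵥ σ)
      (fun P Q => Matrix.add_mulVec P Q σ)) (continuous_mulVec_const σ)
  have hsingle : HasSum (fun k : ℕ => ((k !⁻¹ : ℝ) • N ^ k) *ᵥ σ) σ := by
    have h0 : (((0:ℕ) !⁻¹ : ℝ) • N ^ 0) *ᵥ σ = σ := by
      simp
    have := hasSum_single (f := fun k : ℕ => ((k !⁻¹ : ℝ) • N ^ k) *ᵥ σ) 0 (fun k hk => by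
      obtain ⟨l, rfl⟩ := Nat.exists_eq_succ_of_ne_zero hk
      simp only [Matrix.smul_mulVec, pow_succ, ← Matrix.mulVec_mulVec, h,
        Matrix.mulVec_zero, smul_zero])
    simpa using this
  exact hmap.unique hsingle

lemma hasDerivAt_expFlow (M : Matrix (Fin n) (Fin n) ℝ) (x₀ : Fin n → ℝ) (t : ℝ) :
    HasDerivAt (fun t : ℝ => NormedSpace.exp (t • M) *ᵥ x₀)
      (M *ᵥ (NormedSpace.exp (t • M) *ᵥ x₀)) t := by
  letI : SeminormedRing (Matrix (Fin n) (Fin n) ℝ) := Matrix.linftyOpSemiNormedRing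
  letI : NormedRing (Matrix (Fin n) (Fin n) ℝ) := Matrix.linftyOpNormedRing
  letI : NormedAlgebra ℝ (Matrix (Fin n) (Fin n) ℝ) := Matrix.linftyOpNormedAlgebra
  have h1 := hasDerivAt_exp_smul_const' (𝕂 := ℝ) M t
  let Φlin : Matrix (Fin n) (Fin n) ℝ →ₗ[ℝ] (Fin n → ℝ) :=
    { toFun := fun P => P *ᵥ x₀
      map_add' := fun P Q => Matrix.add_mulVec P Q x₀
      map_smul' := fun c P => Matrix.smul_mulVec c P x₀ }
  let Φ : Matrix (Fin n) (Fin n) ℝ →L[ℝ] (Fin n → ℝ) :=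
    { toLinearMap := Φlin, cont := continuous_mulVec_const x₀ }
  have h2 := Φ.hasFDerivAt.comp_hasDerivAt t h1
  have h3 : Φ (M * NormedSpace.exp (t • M)) = M *ᵥ (NormedSpace.exp (t • M) *ᵥ x₀) := by
    show (M * NormedSpace.exp (t • M)) *ᵥ x₀ = _
    rw [← Matrix.mulVec_mulVec]
  replace h2 := h2.congr_deriv h3
  exact h2

lemma exists_quad_lb (S : Matrix (Fin (n+1)) (Fin (n+1)) ℝ)
    (hpd : ∀ x : Fin (n+1) → ℝ, x ≠ 0 → 0 < x ⬝ᵥ (S *ᵥ x)) :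
    ∃ c > 0, ∀ x : Fin (n+1) → ℝ, c * (x ⬝ᵥ x) ≤ x ⬝ᵥ (S *ᵥ x) := by
  set K : Set (Fin (n+1) → ℝ) := {x | x ⬝ᵥ x = 1} with hK
  have hQcont : Continuous fun x : Fin (n+1) → ℝ => x ⬝ᵥ x := by
    simp only [dotProduct]
    exact continuous_finset_sum _ fun j _ => (continuous_apply j).mul (continuous_apply j)
  have hfcont : Continuous fun x : Fin (n+1) → ℝ => x ⬝ᵥ (S *ᵥ x) := by
    simp only [dotProduct, mulVec]
    refine continuous_finset_sum _ fun j _ => (continuous_apply j).mul ?_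
    exact continuous_finset_sum _ fun k _ => continuous_const.mul (continuous_apply k)
  have hKclosed : IsClosed K := isClosed_eq hQcont continuous_const
  have hKsub : K ⊆ Metric.closedBall 0 1 := by
    intro x hx
    rw [Metric.mem_closedBall, dist_zero_right]
    rw [pi_norm_le_iff_of_nonneg zero_le_one]
    intro i
    have h1 : x i * x i ≤ x ⬝ᵥ x := by
      rw [dotProduct]
      exact Finset.single_le_sum (f := fun j => x j * x j)
        (fun j _ => mul_self_nonneg _) (Finset.mem_univ i)
    rw [hx] at h1
    rw [Real.norm_eq_abs]
    exact abs_le_one_iff_mul_self_le_one.mpr h1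
  have hKcomp : IsCompact K :=
    (isCompact_closedBall (0 : Fin (n+1) → ℝ) 1).of_isClosed_subset hKclosed hKsub
  have hKne : K.Nonempty := by
    refine ⟨Pi.single 0 1, ?_⟩
    simp only [hK, Set.mem_setOf_eq, dotProduct]
    rw [Finset.sum_eq_single 0]
    · simp
    · intro j _ hj; simp [Pi.single_apply, hj]
    · intro h; exact absurd (Finset.mem_univ _) h
  obtain ⟨u, huK, hmin⟩ := hKcomp.exists_isMinOn hKne hfcont.continuousOn
  have hu0 : u ≠ 0 := by
    intro h0
    have : u ⬝ᵥ u = 0 := by rw [h0]; simp [dotProduct]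
    rw [huK] at this
    norm_num at this
  refine ⟨u ⬝ᵥ (S *ᵥ u), hpd u hu0, fun x => ?_⟩
  rcases eq_or_ne x 0 with rfl | hx
  · simp [dotProduct]
  · have hQpos : 0 < x ⬝ᵥ x := by
      obtain ⟨i, hi⟩ := Function.ne_iff.mp hx
      rw [dotProduct]
      exact Finset.sum_pos' (fun j _ => mul_self_nonneg _)
        ⟨i, Finset.mem_univ i, mul_self_pos.mpr hi⟩
    set r := Real.sqrt (x ⬝ᵥ x) with hrdef
    have hr : 0 < r := Real.sqrt_pos.mpr hQpos
    have hr2 : r * r = x ⬝ᵥ x := Real.mul_self_sqrt hQpos.le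
    set u' : Fin (n+1) → ℝ := r⁻¹ • x with hu'
    have hdot1 : u' ⬝ᵥ u' = r⁻¹ * (r⁻¹ * (x ⬝ᵥ x)) := by
      rw [hu', smul_dotProduct, dotProduct_smul, smul_eq_mul, smul_eq_mul]
    have hdot2 : u' ⬝ᵥ (S *ᵥ u') = r⁻¹ * (r⁻¹ * (x ⬝ᵥ (S *ᵥ x))) := by
      rw [hu', smul_dotProduct, Matrix.mulVec_smul, dotProduct_smul, smul_eq_mul, smul_eq_mul]
    have hmem : u' ∈ K := by
      show u' ⬝ᵥ u' = 1
      rw [hdot1, ← hr2]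
      field_simp
    have h5 := isMinOn_iff.mp hmin u' hmem
    have key : x ⬝ᵥ (S *ᵥ x) = (r * r) * (u' ⬝ᵥ (S *ᵥ u')) := by
      rw [hdot2]
      field_simp
    calc u ⬝ᵥ (S *ᵥ u) * (x ⬝ᵥ x) = (r * r) * (u ⬝ᵥ (S *ᵥ u)) := by rw [← hr2]; ring
      _ ≤ (r * r) * (u' ⬝ᵥ (S *ᵥ u')) := by
          refine mul_le_mul_of_nonneg_left h5 (by positivity)
      _ = x ⬝ᵥ (S *ᵥ x) := key.symm

end SignedNet

namespace SignedNet
variable {n : ℕ}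

lemma quad_deriv_eq (M : Matrix (Fin n) (Fin n) ℝ) (u : Fin n → ℝ) :
    ∑ i, ((((-M) *ᵥ u) i) * u i + u i * (((-M) *ᵥ u) i))
      = -(u ⬝ᵥ ((M + Mᵀ) *ᵥ u)) := by
  have core : ∑ i, ∑ j, M j i * (u i * u j) = ∑ i, ∑ j, M i j * (u i * u j) := by
    rw [Finset.sum_comm]
    exact Finset.sum_congr rfl fun i _ => Finset.sum_congr rfl fun j _ => by ring
  have lhs_eq : ∑ i, ((((-M) *ᵥ u) i) * u i + u i * (((-M) *ᵥ u) i))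
      = ∑ i, ∑ j, (-(M i j * (u i * u j)) + -(M i j * (u i * u j))) := by
    refine Finset.sum_congr rfl fun i _ => ?_
    simp only [mulVec, dotProduct, Matrix.neg_apply]
    rw [Finset.sum_mul, Finset.mul_sum, ← Finset.sum_add_distrib]
    exact Finset.sum_congr rfl fun j _ => by ring
  have rhs_eq : u ⬝ᵥ ((M + Mᵀ) *ᵥ u)
      = ∑ i, ∑ j, (M i j * (u i * u j)) + ∑ i, ∑ j, (M j i * (u i * u j)) := by
    simp only [dotProduct, mulVec, Matrix.add_apply, Matrix.transpose_apply]
    rw [← Finset.sum_add_distrib]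
    refine Finset.sum_congr rfl fun i _ => ?_
    rw [Finset.mul_sum, ← Finset.sum_add_distrib, Finset.sum_add_distrib]
    rw [← Finset.sum_add_distrib]
    exact Finset.sum_congr rfl fun j _ => by ring
  rw [lhs_eq, rhs_eq, core]
  simp only [Finset.sum_add_distrib, Finset.sum_neg_distrib]
  ring

lemma decay (M : Matrix (Fin (n+1)) (Fin (n+1)) ℝ)
    (hpd : ∀ x : Fin (n+1) → ℝ, x ≠ 0 → 0 < x ⬝ᵥ ((M + Mᵀ) *ᵥ x)) (x₀ : Fin (n+1) → ℝ) :
    Tendsto (fun t : ℝ => NormedSpace.exp (-(t • M)) *ᵥ x₀) atTop (nhds 0) := by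
  obtain ⟨c, hc, hlb⟩ := exists_quad_lb (M + Mᵀ) hpd
  set g : ℝ → (Fin (n+1) → ℝ) := fun t => NormedSpace.exp (t • (-M)) *ᵥ x₀ with hgdef
  have hfun : (fun t : ℝ => NormedSpace.exp (-(t • M)) *ᵥ x₀) = g := by
    funext t
    rw [hgdef]
    show NormedSpace.exp (-(t • M)) *ᵥ x₀ = NormedSpace.exp (t • -M) *ᵥ x₀
    rw [smul_neg]
  rw [hfun]
  have hgderiv : ∀ t, HasDerivAt g ((-M) *ᵥ g t) t := fun t => hasDerivAt_expFlow (-M) x₀ t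
  set φ : ℝ → ℝ := fun t => g t ⬝ᵥ g t with hφdef
  have hφderiv : ∀ t, HasDerivAt φ (-(g t ⬝ᵥ ((M + Mᵀ) *ᵥ g t))) t := by
    intro t
    have hco : ∀ i, HasDerivAt (fun s => g s i) (((-M) *ᵥ g t) i) t := fun i =>
      (ContinuousLinearMap.proj (R := ℝ) (φ := fun _ : Fin (n+1) => ℝ) i).hasFDerivAt.comp_hasDerivAt
        t (hgderiv t)
    have hsum : HasDerivAt (fun s => ∑ i, g s i * g s i)
        (∑ i, (((-M) *ᵥ g t) i * g t i + g t i * ((-M) *ᵥ g t) i)) t :=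
      HasDerivAt.fun_sum fun i _ => (hco i).mul (hco i)
    rw [quad_deriv_eq M (g t)] at hsum
    exact hsum
  set ψ : ℝ → ℝ := fun t => Real.exp (c * t) * φ t with hψdef
  have hψderiv : ∀ t, HasDerivAt ψ
      (c * Real.exp (c * t) * φ t + Real.exp (c * t) * (-(g t ⬝ᵥ ((M + Mᵀ) *ᵥ g t)))) t := by
    intro t
    have he : HasDerivAt (fun s : ℝ => Real.exp (c * s)) (c * Real.exp (c * t)) t := by
      have h1 := (Real.hasDerivAt_exp (c * t)).comp t ((hasDerivAt_id t).const_mul c)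
      simpa [mul_comm, Function.comp_def] using h1
    exact he.mul (hφderiv t)
  have hψ' : ∀ t, c * Real.exp (c * t) * φ t
      + Real.exp (c * t) * (-(g t ⬝ᵥ ((M + Mᵀ) *ᵥ g t))) ≤ 0 := by
    intro t
    have h1 := hlb (g t)
    have h2 := Real.exp_pos (c * t)
    nlinarith
  have hanti : AntitoneOn ψ Set.univ := by
    refine antitoneOn_of_deriv_nonpos convex_univ ?_ ?_ ?_
    · exact (continuous_iff_continuousAt.mpr fun t =>
        (hψderiv t).differentiableAt.continuousAt).continuousOn
    · intro x _
      exact (hψderiv x).differentiableAt.differentiableWithinAt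
    · intro x _
      rw [(hψderiv x).deriv]
      exact hψ' x
  have hφnn : ∀ t, 0 ≤ φ t := fun t => by
    simp only [hφdef, dotProduct]
    exact Finset.sum_nonneg fun i _ => mul_self_nonneg _
  have hbound : ∀ t : ℝ, 0 ≤ t → φ t ≤ Real.exp (-(c * t)) * φ 0 := by
    intro t ht
    have h1 : ψ t ≤ ψ 0 := hanti (Set.mem_univ 0) (Set.mem_univ t) ht
    simp only [hψdef, mul_zero, Real.exp_zero, one_mul] at h1
    have h3 := Real.exp_pos (c * t)
    rw [Real.exp_neg, inv_mul_eq_div, le_div_iff₀ h3]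
    nlinarith
  have hexp0 : Tendsto (fun t : ℝ => Real.exp (-(c * t)) * φ 0) atTop (nhds 0) := by
    have h1 : Tendsto (fun t : ℝ => c * t) atTop atTop := tendsto_id.const_mul_atTop hc
    have h2 := Real.tendsto_exp_neg_atTop_nhds_zero.comp h1
    have h3 := h2.mul_const (φ 0)
    simpa [Function.comp] using h3
  have hφ0 : Tendsto φ atTop (nhds 0) :=
    tendsto_of_tendsto_of_tendsto_of_le_of_le' tendsto_const_nhds hexp0
      (Eventually.of_forall hφnn) (eventually_atTop.mpr ⟨0, fun t ht => hbound t ht⟩)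
  refine tendsto_pi_nhds.mpr fun i => ?_
  simp only [Pi.zero_apply]
  have hsq : Tendsto (fun t => g t i * g t i) atTop (nhds 0) :=
    tendsto_of_tendsto_of_tendsto_of_le_of_le tendsto_const_nhds hφ0
      (fun t => mul_self_nonneg _)
      (fun t => Finset.single_le_sum (f := fun j => g t j * g t j)
        (fun j _ => mul_self_nonneg _) (Finset.mem_univ i))
  have habs : Tendsto (fun t => |g t i|) atTop (nhds 0) := by
    have h1 := (Real.continuous_sqrt.tendsto 0).comp hsq
    simpa [Function.comp_def, Real.sqrt_mul_self_eq_abs] using h1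
  exact tendsto_of_tendsto_of_tendsto_of_le_of_le (by simpa using habs.neg) habs
    (fun t => neg_abs_le _) (fun t => le_abs_self _)

end SignedNet

/-- `ẋ = −W·L·x` achieves state stability iff `G` is structurally
unbalanced. -/
theorem WL_state_stability (n : ℕ) (hn : 2 ≤ n)
    (A : Matrix (Fin n) (Fin n) ℝ)
    (hdiag : ∀ i, A i i = 0) (hdigon : ∀ i j, 0 ≤ A i j * A j i)
    (hsc : StronglyConnected A) :
    ¬ StructBalanced A ↔
      ∀ x₀ : Fin n → ℝ,
        Filter.Tendsto (fun t : ℝ => NormedSpace.exp (-(t • (Wmat A * lapOf A))) *ᵥ x₀)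
          Filter.atTop (nhds 0) := by
  obtain ⟨m, rfl⟩ : ∃ m, n = m + 1 := ⟨n - 1, by omega⟩
  constructor
  · intro hnb x₀
    have hpd : ∀ x : Fin (m+1) → ℝ, x ≠ 0 →
        0 < x ⬝ᵥ ((Wmat A * lapOf A + (Wmat A * lapOf A)ᵀ) *ᵥ x) := by
      intro x hx
      rw [SignedNet.quadform_eq A hsc x]
      exact SignedNet.PhiE_pos A hdiag hsc hnb hx
    exact SignedNet.decay (Wmat A * lapOf A) hpd x₀
  · intro hstab hb
    obtain ⟨σ, hg, hpos⟩ := hb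
    have hLσ : lapOf A *ᵥ σ = 0 := SignedNet.lap_mulVec_gauge A hg hpos
    have hP : (Wmat A * lapOf A) *ᵥ σ = 0 := by
      rw [← Matrix.mulVec_mulVec, hLσ, Matrix.mulVec_zero]
    have hMσ : ∀ t : ℝ, (-(t • (Wmat A * lapOf A))) *ᵥ σ = 0 := by
      intro t
      rw [Matrix.neg_mulVec, Matrix.smul_mulVec, hP, smul_zero, neg_zero]
    have hfix : ∀ t : ℝ, NormedSpace.exp (-(t • (Wmat A * lapOf A))) *ᵥ σ = σ :=
      fun t => SignedNet.exp_mulVec_fixed _ (hMσ t)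
    have hconst : Filter.Tendsto (fun _ : ℝ => σ) Filter.atTop (nhds 0) :=
      Filter.Tendsto.congr hfix (hstab σ)
    have hσ0 : (0 : Fin (m+1) → ℝ) = σ := tendsto_nhds_unique hconst tendsto_const_nhds
    have := hg 0
    rw [← hσ0] at this
    simp only [Pi.zero_apply] at this
    rcases this with h | h <;> norm_num at h
end
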